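/- arXiv:1512.00361 — 7 statements merged into one kernel-verified Lean document; each statement's English description precedes it below -/
import Mathlib

section
/- Let G be a finite group and let S be a separating set of the intersection graph Γ(G) that is minimal (no proper subset of S is separating). If Γ(G) is not a complete graph, then S is upward closed: if H ∈ S and H ≤ K < G with K non-trivial, then K ∈ S. -/
/-- The intersection graph of a group `G`: vertices are the proper non-trivial
subgroups, with an edge between two distinct subgroups whose intersection is
non-trivial. -/
def interGraph (G : Type*) [Group G] :
    SimpleGraph {H : Subgroup G // H ≠ ⊥ ∧ H ≠ ⊤} where
  Adj A B := A ≠ B ∧ A.1 ⊓ B.1 ≠ ⊥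
  symm := by
    constructor
    rintro A B ⟨h1, h2⟩
    exact ⟨h1.symm, by rwa [inf_comm]⟩
  loopless := by constructor; rintro A ⟨h1, _⟩; exact h1 rfl

/-- `S` is a separating set of `Γ`: after removing the vertices of `S`, some
two remaining vertices are not joined by a path. -/
def IsSepSet {V : Type*} (Γ : SimpleGraph V) (S : Set V) : Prop :=
  ∃ a b : ↥(Sᶜ), ¬ (Γ.induce Sᶜ).Reachable a b

/-- A graph is `k`-connected if it has more than `k` vertices and no
separating set of cardinality `< k`. -/
def KConnected {V : Type*} (Γ : SimpleGraph V) (k : ℕ) : Prop :=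
  k < Nat.card V ∧ ∀ S : Set V, IsSepSet Γ S → k ≤ Nat.card S

/-- A minimal subgroup: a minimal element of the poset of non-trivial subgroups. -/
def IsMinimalSubgroup {G : Type*} [Group G] (A : Subgroup G) : Prop :=
  A ≠ ⊥ ∧ ∀ K : Subgroup G, K ≠ ⊥ → K ≤ A → K = A

/-- There exist (at least) `k` pairwise internally independent paths from `u` to `v`. -/
def HasIndepPaths {V : Type*} (Γ : SimpleGraph V) (u v : V) (k : ℕ) : Prop :=
  ∃ p : Fin k → Γ.Walk u v, (∀ i, (p i).IsPath) ∧
    ∀ i j, i ≠ j → ∀ x ∈ (p i).support, x ∈ (p j).support → x = u ∨ x = v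

/-- A finite group is supersolvable if it has a normal series (all terms normal
in the whole group) whose successive factors are of prime order. -/
def IsSupersolvable (G : Type*) [Group G] : Prop :=
  ∃ (n : ℕ) (s : Fin (n + 1) → Subgroup G), s 0 = ⊥ ∧ s (Fin.last n) = ⊤ ∧
    (∀ i, (s i).Normal) ∧
    ∀ i : Fin n, s i.castSucc ≤ s i.succ ∧ ((s i.castSucc).relIndex (s i.succ)).Prime

theorem stmt1 (G : Type*) [Group G] [Finite G]
    (S : Set {H : Subgroup G // H ≠ ⊥ ∧ H ≠ ⊤})
    (hS : IsSepSet (interGraph G) S)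
    (hmin : ∀ T ⊂ S, ¬ IsSepSet (interGraph G) T)
    (hnc : interGraph G ≠ ⊤) :
    ∀ H ∈ S, ∀ K : {H : Subgroup G // H ≠ ⊥ ∧ H ≠ ⊤}, H.1 ≤ K.1 → K ∈ S := by
  classical
  intro H hH K hHK
  by_contra hK
  have hTS : S \ {H} ⊂ S := Set.sdiff_singleton_ssubset.mpr hH
  have hconn := hmin (S \ {H}) hTS
  rw [IsSepSet] at hconn
  push_neg at hconn
  obtain ⟨a, b, hab⟩ := hS
  apply hab
  -- the replacement map
  let φ : ↥(S \ {H})ᶜ → ↥Sᶜ := fun x =>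
    if h : x.1 = H then ⟨K, hK⟩ else ⟨x.1, fun hx => x.2 ⟨hx, h⟩⟩
  have step : ∀ x y : ↥(S \ {H})ᶜ, (interGraph G).Adj x.1 y.1 →
      φ x = φ y ∨ ((interGraph G).induce Sᶜ).Adj (φ x) (φ y) := by
    intro x y hxy
    obtain ⟨hne, hinf⟩ := hxy
    by_cases hx : x.1 = H <;> by_cases hy : y.1 = H
    · exact absurd (hx.trans hy.symm) hne
    · by_cases hyK : y.1 = K
      · left
        simp only [φ, dif_pos hx, dif_neg hy]
        exact Subtype.ext hyK.symm
      · right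
        simp only [φ, dif_pos hx, dif_neg hy]
        show (interGraph G).Adj K ↑y
        refine ⟨fun hc => hyK hc.symm, fun hc => ?_⟩
        have hle : H.1 ⊓ y.1.1 ≤ K.1 ⊓ y.1.1 := inf_le_inf_right _ hHK
        rw [hc] at hle
        rw [hx] at hinf
        exact hinf (le_bot_iff.mp hle)
    · by_cases hxK : x.1 = K
      · left
        simp only [φ, dif_pos hy, dif_neg hx]
        exact Subtype.ext hxK
      · right
        simp only [φ, dif_pos hy, dif_neg hx]
        show (interGraph G).Adj ↑x K
        refine ⟨fun hc => hxK hc, fun hc => ?_⟩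
        have hle : x.1.1 ⊓ H.1 ≤ x.1.1 ⊓ K.1 := inf_le_inf_left _ hHK
        rw [hc] at hle
        rw [hy] at hinf
        exact hinf (le_bot_iff.mp hle)
    · right
      simp only [φ, dif_neg hx, dif_neg hy]
      show (interGraph G).Adj ↑x ↑y
      exact ⟨hne, hinf⟩
  have main : ∀ (x y : ↥(S \ {H})ᶜ), ((interGraph G).induce (S \ {H})ᶜ).Walk x y →
      ((interGraph G).induce Sᶜ).Reachable (φ x) (φ y) := by
    intro x y p
    induction p with
    | nil => exact SimpleGraph.Reachable.refl _
    | cons h p ih =>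
      rcases step _ _ h with heq | hadj
      · exact heq ▸ ih
      · exact (hadj.reachable).trans ih
  -- lift a and b
  have haS : a.1 ∉ S := a.2
  have hbS : b.1 ∉ S := b.2
  have haH : a.1 ≠ H := fun h => haS (h ▸ hH)
  have hbH : b.1 ≠ H := fun h => hbS (h ▸ hH)
  let a' : ↥(S \ {H})ᶜ := ⟨a.1, fun h => haS h.1⟩
  let b' : ↥(S \ {H})ᶜ := ⟨b.1, fun h => hbS h.1⟩
  obtain ⟨p⟩ := hconn a' b'
  have := main a' b' p
  have ha' : φ a' = a := by simp only [φ, dif_neg haH]; exact dif_neg haH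
  have hb' : φ b' = b := by simp only [φ, dif_neg hbH]; exact dif_neg hbH
  rwa [ha', hb'] at this
end

section
/- Let G be a finite group whose intersection graph has more than k vertices. Then Γ(G) is k-connected if and only if between every pair of distinct minimal subgroups of G there exist at least k internally independent paths in Γ(G). -/
namespace MengerAux

variable {V : Type*}

inductive DWalk (R : V → V → Prop) : V → V → Type _
  | nil (a : V) : DWalk R a a
  | cons {a b c : V} (h : R a b) (w : DWalk R b c) : DWalk R a c

namespace DWalk

variable {R R' : V → V → Prop} {a b c : V}

def support : ∀ {a b : V}, DWalk R a b → List V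
  | _, _, nil a => [a]
  | _, _, @cons _ _ a _ _ _ w => a :: w.support

@[simp] lemma support_nil : (nil (R := R) a).support = [a] := rfl

@[simp] lemma support_cons (h : R a b) (w : DWalk R b c) :
    (cons h w).support = a :: w.support := rfl

lemma start_mem_support : ∀ {a b : V} (w : DWalk R a b), a ∈ w.support
  | _, _, nil a => by simp
  | _, _, cons _ w => by simp

lemma end_mem_support : ∀ {a b : V} (w : DWalk R a b), b ∈ w.support
  | _, _, nil a => by simp
  | _, _, cons _ w => by simp [end_mem_support w]

def transfer : ∀ {a b : V} (w : DWalk R a b),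
    (∀ p q, R p q → p ∈ w.support → q ∈ w.support → R' p q) → DWalk R' a b
  | _, _, nil a, _ => nil a
  | _, _, cons h w, H =>
      cons (H _ _ h (by simp) (by simp [start_mem_support w]))
        (w.transfer (fun p q hr hp hq => H p q hr (by simp [hp]) (by simp [hq])))

@[simp] lemma support_transfer : ∀ {a b : V} (w : DWalk R a b) (H),
    (w.transfer (R' := R') H).support = w.support
  | _, _, nil a, _ => rfl
  | _, _, cons h w, H => by simp [transfer, support_transfer w]

def mono (hle : ∀ p q, R p q → R' p q) (w : DWalk R a b) : DWalk R' a b :=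
  w.transfer (fun p q hr _ _ => hle p q hr)

@[simp] lemma support_mono (hle : ∀ p q, R p q → R' p q) (w : DWalk R a b) :
    (w.mono hle).support = w.support := support_transfer w _

def append : ∀ {a b c : V}, DWalk R a b → DWalk R b c → DWalk R a c
  | _, _, _, nil _, w => w
  | _, _, _, cons h w', w => cons h (w'.append w)

lemma mem_support_append_iff {x : V} : ∀ {a b c : V} (w₁ : DWalk R a b) (w₂ : DWalk R b c),
    x ∈ (w₁.append w₂).support ↔ x ∈ w₁.support ∨ x ∈ w₂.support
  | _, _, _, nil a, w₂ => by
      simp only [append, support_nil, List.mem_singleton]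
      constructor
      · exact fun h => Or.inr h
      · rintro (rfl | h)
        · exact start_mem_support w₂
        · exact h
  | _, _, _, cons h w', w₂ => by
      simp [append, mem_support_append_iff w' w₂, or_assoc]

def copy {a' b' : V} (w : DWalk R a b) (ha : a = a') (hb : b = b') : DWalk R a' b' :=
  ha ▸ hb ▸ w

@[simp] lemma support_copy {a' b' : V} (w : DWalk R a b) (ha : a = a') (hb : b = b') :
    (w.copy ha hb).support = w.support := by subst ha; subst hb; rfl

lemma eq_of_no_arcs (hR : ∀ p q, ¬ R p q) (w : DWalk R a b) : a = b := by
  cases w with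
  | nil => rfl
  | cons h _ => exact absurd h (hR _ _)

/-- Take the prefix of a walk up to the first vertex satisfying `P`. -/
noncomputable def takeUntilP (P : V → Prop) :
    ∀ {a b : V} (w : DWalk R a b), (∃ x ∈ w.support, P x) →
      Σ' (c : V) (w' : DWalk (fun p q => R p q ∧ ¬ P p) a c),
        P c ∧ ∀ x ∈ w'.support, x ∈ w.support
  | a, _, nil _, h => ⟨a, nil a, by simpa using h, by simp⟩
  | a, _, cons hR w, h => by
      by_cases hPa : P a
      · exact ⟨a, nil a, hPa, by simp⟩
      · have h' : ∃ x ∈ w.support, P x := by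
          obtain ⟨x, hx, hPx⟩ := h
          rcases (by simpa using hx : x = a ∨ x ∈ w.support) with rfl | hx'
          · exact absurd hPx hPa
          · exact ⟨x, hx', hPx⟩
        obtain ⟨c, w', hPc, hsub⟩ := takeUntilP P w h'
        exact ⟨c, cons ⟨hR, hPa⟩ w', hPc, by
          intro x hx
          rcases (by simpa using hx : x = a ∨ x ∈ w'.support) with rfl | hx'
          · simp
          · simp [hsub x hx']⟩

/-- Take the suffix of a walk from the last vertex satisfying `P`. -/
noncomputable def dropUntilLastP (P : V → Prop) [DecidablePred P] :
    ∀ {a b : V} (w : DWalk R a b), (∃ x ∈ w.support, P x) →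
      Σ' (c : V) (w' : DWalk (fun p q => R p q ∧ ¬ P q) c b),
        P c ∧ ∀ x ∈ w'.support, x ∈ w.support
  | a, _, nil _, h => ⟨a, nil a, by simpa using h, by simp⟩
  | a, _, @cons _ _ _ d _ hR w, h => by
      by_cases hw : ∃ x ∈ w.support, P x
      · obtain ⟨c, w', hPc, hsub⟩ := dropUntilLastP P w hw
        exact ⟨c, w', hPc, fun x hx => by simp [hsub x hx]⟩
      · push_neg at hw
        have hPa : P a := by
          obtain ⟨x, hx, hPx⟩ := h
          rcases (by simpa using hx : x = a ∨ x ∈ w.support) with rfl | hx'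
          · exact hPx
          · exact absurd hPx (hw x hx')
        refine ⟨a, cons ⟨hR, hw d (start_mem_support w)⟩
          (w.transfer (fun p q hr hp hq => ⟨hr, hw q hq⟩)), hPa, ?_⟩
        intro x hx
        rw [support_cons, support_transfer] at hx
        rcases (by simpa using hx : x = a ∨ x ∈ w.support) with rfl | hx'
        · simp
        · simp [hx']

lemma prop_imp_eq_end_of_tails {P : V → Prop} :
    ∀ {a c : V} (w : DWalk (fun p q => R p q ∧ ¬ P p) a c) (x : V),
      x ∈ w.support → P x → x = c
  | _, _, nil a, x, hx, hPx => by simpa using hx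
  | _, _, cons h w, x, hx, hPx => by
      rcases (by simpa using hx : x = _ ∨ x ∈ w.support) with rfl | hx'
      · exact absurd hPx h.2
      · exact prop_imp_eq_end_of_tails w x hx' hPx

lemma not_prop_support_of_heads {P : V → Prop} :
    ∀ {a b : V} (w : DWalk (fun p q => R p q ∧ ¬ P q) a b) (ha : ¬ P a) (x : V),
      x ∈ w.support → ¬ P x
  | _, _, nil a, ha, x, hx => by
      have : x = a := by simpa using hx
      subst this; exact ha
  | _, _, cons h w, ha, x, hx => by
      rcases (by simpa using hx : x = _ ∨ x ∈ w.support) with rfl | hx'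
      · exact ha
      · exact not_prop_support_of_heads w h.2 x hx'

lemma prop_imp_eq_start_of_heads {P : V → Prop} :
    ∀ {a b : V} (w : DWalk (fun p q => R p q ∧ ¬ P q) a b) (x : V),
      x ∈ w.support → P x → x = a
  | _, _, nil a, x, hx, hPx => by simpa using hx
  | _, _, cons h w, x, hx, hPx => by
      rcases (by simpa using hx : x = _ ∨ x ∈ w.support) with rfl | hx'
      · rfl
      · exact absurd hPx (not_prop_support_of_heads w h.2 x hx')

end DWalk

end MengerAux
namespace MengerAux

section Menger

open DWalk Finset

variable {V : Type*} [Fintype V] [DecidableEq V]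

/-- `S` cuts every `R`-walk from `A` to `B`. -/
abbrev Cuts (R : V → V → Prop) (A B S : Finset V) : Prop :=
  ∀ a ∈ A, ∀ b ∈ B, ∀ w : DWalk R a b, ∃ s ∈ S, s ∈ w.support

/-- There are `k` pairwise disjoint `R`-walks from `A` to `B`. -/
abbrev Conn (R : V → V → Prop) (A B : Finset V) (k : ℕ) : Prop :=
  ∃ f : Fin k → Σ' (p : V × V), DWalk R p.1 p.2,
    (∀ i, (f i).1.1 ∈ A) ∧ (∀ i, (f i).1.2 ∈ B) ∧
    ∀ i j, i ≠ j → ∀ x ∈ (f i).2.support, x ∉ (f j).2.support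

lemma dmenger_base {R : V → V → Prop} (hR : ∀ p q, ¬ R p q) (A B : Finset V) (k : ℕ)
    (hsep : ∀ S : Finset V, Cuts R A B S → k ≤ S.card) : Conn R A B k := by
  have hcut : Cuts R A B (A ∩ B) := by
    intro a ha b hb w
    obtain rfl := DWalk.eq_of_no_arcs hR w
    exact ⟨a, Finset.mem_inter.2 ⟨ha, hb⟩, w.start_mem_support⟩
  obtain ⟨t, hts, htc⟩ := Finset.exists_subset_card_eq (hsep _ hcut)
  let e := t.equivFinOfCardEq htc
  refine ⟨fun i => ⟨((e.symm i : V), (e.symm i : V)), DWalk.nil _⟩, ?_, ?_, ?_⟩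
  · exact fun i => (Finset.mem_inter.1 (hts (e.symm i).2)).1
  · exact fun i => (Finset.mem_inter.1 (hts (e.symm i).2)).2
  · intro i j hij x hxi hxj
    simp only [DWalk.support_nil, List.mem_singleton] at hxi hxj
    exact hij (e.symm.injective (Subtype.ext (hxi ▸ hxj ▸ rfl)))

theorem dmenger : ∀ (n : ℕ) (R : V → V → Prop),
    {p : V × V | R p.1 p.2}.ncard ≤ n →
    ∀ (A B : Finset V) (k : ℕ),
      (∀ S : Finset V, Cuts R A B S → k ≤ S.card) → Conn R A B k := by
  intro n
  induction n with
  | zero =>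
    intro R hcard A B k hsep
    refine dmenger_base ?_ A B k hsep
    intro p q hpq
    have hz : {p : V × V | R p.1 p.2} = ∅ :=
      (Set.ncard_eq_zero (Set.toFinite _)).1 (Nat.le_zero.1 hcard)
    have hm : (p, q) ∈ {p : V × V | R p.1 p.2} := hpq
    rw [hz] at hm
    simpa using hm
  | succ n IH =>
    intro R hcard A B k hsep
    by_cases harc : ∃ p : V × V, R p.1 p.2
    · obtain ⟨⟨x, y⟩, hxy⟩ := harc
      set R' : V → V → Prop := fun p q => R p q ∧ ¬ (p = x ∧ q = y) with hR'def
      have hR'le : ∀ p q, R' p q → R p q := fun p q h => h.1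
      have hcard' : {p : V × V | R' p.1 p.2}.ncard ≤ n := by
        have hss : {p : V × V | R' p.1 p.2} = {p : V × V | R p.1 p.2} \ {(x, y)} := by
          ext ⟨p, q⟩
          simp only [hR'def, Set.mem_setOf_eq, Set.mem_diff, Set.mem_singleton_iff,
            Prod.mk.injEq]
        have hlt := Set.ncard_diff_singleton_lt_of_mem
          (show (x, y) ∈ {p : V × V | R p.1 p.2} from hxy) (Set.toFinite _)
        rw [hss]
        omega
      by_cases hc : ∀ S : Finset V, Cuts R' A B S → k ≤ S.card
      · obtain ⟨f, h1, h2, h3⟩ := IH R' hcard' A B k hc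
        refine ⟨fun i => ⟨(f i).1, (f i).2.mono hR'le⟩, h1, h2, ?_⟩
        intro i j hij z hz
        rw [support_mono] at hz ⊢
        exact h3 i j hij z hz
      · push_neg at hc
        obtain ⟨S₀, hS₀cut, hS₀card⟩ := hc
        have trX : ∀ {a b : V} (w : DWalk R a b), x ∉ w.support →
            Σ' (w' : DWalk R' a b), w'.support = w.support :=
          fun w hx => ⟨w.transfer (fun p q hr hp _ => ⟨hr, fun he => hx (he.1 ▸ hp)⟩),
            support_transfer _ _⟩
        have trY : ∀ {a b : V} (w : DWalk R a b), y ∉ w.support →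
            Σ' (w' : DWalk R' a b), w'.support = w.support :=
          fun w hy => ⟨w.transfer (fun p q hr _ hq => ⟨hr, fun he => hy (he.2 ▸ hq)⟩),
            support_transfer _ _⟩
        have F1 : Cuts R A B (insert x S₀) := by
          intro a ha b hb w
          by_cases hx : x ∈ w.support
          · exact ⟨x, Finset.mem_insert_self _ _, hx⟩
          · obtain ⟨s, hs, hsw⟩ := hS₀cut a ha b hb (trX w hx).1
            rw [(trX w hx).2] at hsw
            exact ⟨s, Finset.mem_insert_of_mem hs, hsw⟩
        have F2 : Cuts R A B (insert y S₀) := by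
          intro a ha b hb w
          by_cases hy : y ∈ w.support
          · exact ⟨y, Finset.mem_insert_self _ _, hy⟩
          · obtain ⟨s, hs, hsw⟩ := hS₀cut a ha b hb (trY w hy).1
            rw [(trY w hy).2] at hsw
            exact ⟨s, Finset.mem_insert_of_mem hs, hsw⟩
        have hxS₀ : x ∉ S₀ := by
          intro hx
          have := hsep _ F1
          rw [Finset.insert_eq_self.2 hx] at this
          omega
        have hyS₀ : y ∉ S₀ := by
          intro hy
          have := hsep _ F2
          rw [Finset.insert_eq_self.2 hy] at this
          omega
        have hkcard : S₀.card + 1 = k := by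
          have h1 := hsep _ F1
          have h2 := Finset.card_insert_le x S₀
          omega
        set Sx := insert x S₀ with hSxdef
        set Sy := insert y S₀ with hSydef
        have hSycard : Sy.card = k := by
          rw [hSydef, Finset.card_insert_of_notMem hyS₀]; omega
        have C1 : ∀ T : Finset V, Cuts R' A Sx T → k ≤ T.card := by
          intro T hT
          apply hsep
          intro a ha b hb w
          by_cases hx : x ∈ w.support
          · obtain ⟨c, w1, hc, hsub⟩ := w.takeUntilP (· = x) ⟨x, hx, rfl⟩
            obtain ⟨t, ht, htw⟩ := hT a ha c
              (by rw [hc]; exact Finset.mem_insert_self _ _)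
              (w1.mono (fun p q h => ⟨h.1, fun he => h.2 he.1⟩))
            rw [support_mono] at htw
            exact ⟨t, ht, hsub t htw⟩
          · obtain ⟨s, hs, hsw⟩ := hS₀cut a ha b hb (trX w hx).1
            obtain ⟨c, w1, hc, hsub⟩ := (trX w hx).1.takeUntilP (· ∈ S₀) ⟨s, hsw, hs⟩
            obtain ⟨t, ht, htw⟩ := hT a ha c (Finset.mem_insert_of_mem hc)
              (w1.mono (fun p q h => h.1))
            rw [support_mono] at htw
            have hsupp := hsub t htw
            rw [(trX w hx).2] at hsupp
            exact ⟨t, ht, hsupp⟩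
        have C2 : ∀ T : Finset V, Cuts R' Sy B T → k ≤ T.card := by
          intro T hT
          apply hsep
          intro a ha b hb w
          by_cases hy : y ∈ w.support
          · obtain ⟨c, w1, hc, hsub⟩ := w.dropUntilLastP (· = y) ⟨y, hy, rfl⟩
            obtain ⟨t, ht, htw⟩ := hT c
              (by rw [hc]; exact Finset.mem_insert_self _ _) b hb
              (w1.mono (fun p q h => ⟨h.1, fun he => h.2 he.2⟩))
            rw [support_mono] at htw
            exact ⟨t, ht, hsub t htw⟩
          · obtain ⟨s, hs, hsw⟩ := hS₀cut a ha b hb (trY w hy).1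
            obtain ⟨c, w1, hc, hsub⟩ := (trY w hy).1.dropUntilLastP (· ∈ S₀) ⟨s, hsw, hs⟩
            obtain ⟨t, ht, htw⟩ := hT c (Finset.mem_insert_of_mem hc) b hb
              (w1.mono (fun p q h => h.1))
            rw [support_mono] at htw
            have hsupp := hsub t htw
            rw [(trY w hy).2] at hsupp
            exact ⟨t, ht, hsupp⟩
        obtain ⟨fa, ha1, ha2, ha3⟩ := IH R' hcard' A Sx k C1
        obtain ⟨fb, hb1, hb2, hb3⟩ := IH R' hcard' Sy B k C2
        have ga := fun i : Fin k => (fa i).2.takeUntilP (· ∈ Sx)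
          ⟨(fa i).1.2, (fa i).2.end_mem_support, ha2 i⟩
        set s' : Fin k → V := fun i => (ga i).1 with hs'def
        have hs'Sx : ∀ i, s' i ∈ Sx := fun i => (ga i).2.2.1
        have hgasub : ∀ i, ∀ z ∈ (ga i).2.1.support, z ∈ (fa i).2.support :=
          fun i => (ga i).2.2.2
        have hgaend : ∀ i, ∀ z ∈ (ga i).2.1.support, z ∈ Sx → z = s' i :=
          fun i z hz hzSx => prop_imp_eq_end_of_tails (ga i).2.1 z hz hzSx
        have gb := fun i : Fin k => (fb i).2.dropUntilLastP (· ∈ Sy)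
          ⟨(fb i).1.1, (fb i).2.start_mem_support, hb1 i⟩
        set t' : Fin k → V := fun i => (gb i).1 with ht'def
        have ht'Sy : ∀ i, t' i ∈ Sy := fun i => (gb i).2.2.1
        have hgbsub : ∀ i, ∀ z ∈ (gb i).2.1.support, z ∈ (fb i).2.support :=
          fun i => (gb i).2.2.2
        have hgbstart : ∀ i, ∀ z ∈ (gb i).2.1.support, z ∈ Sy → z = t' i :=
          fun i z hz hzSy => prop_imp_eq_start_of_heads (gb i).2.1 z hz hzSy
        have hs'inj : Function.Injective s' := by
          intro i j hij
          by_contra hne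
          refine ha3 i j hne (s' i) (hgasub i _ (ga i).2.1.end_mem_support) ?_
          rw [hij]
          exact hgasub j _ (ga j).2.1.end_mem_support
        have ht'inj : Function.Injective t' := by
          intro i j hij
          by_contra hne
          refine hb3 i j hne (t' i) (hgbsub i _ (gb i).2.1.start_mem_support) ?_
          rw [hij]
          exact hgbsub j _ (gb j).2.1.start_mem_support
        have ht'surj : ∀ z ∈ Sy, ∃ i, t' i = z := by
          intro z hz
          have himg : Finset.image t' Finset.univ = Sy := by
            apply Finset.eq_of_subset_of_card_le
            · intro w hw
              simp only [Finset.mem_image] at hw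
              obtain ⟨i, _, rfl⟩ := hw
              exact ht'Sy i
            · rw [Finset.card_image_of_injective _ ht'inj, Finset.card_univ,
                Fintype.card_fin, hSycard]
          rw [← himg] at hz
          simp only [Finset.mem_image] at hz
          obtain ⟨i, _, hi⟩ := hz
          exact ⟨i, hi⟩
        set pt : V → V := fun z => if z = x then y else z with hptdef
        have hptSy : ∀ z ∈ Sx, pt z ∈ Sy := by
          intro z hz
          by_cases h : z = x
          · simp only [hptdef, if_pos h]
            exact Finset.mem_insert_self _ _
          · rcases Finset.mem_insert.1 hz with h' | h'
            · exact absurd h' h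
            · simp only [hptdef, if_neg h]
              exact Finset.mem_insert_of_mem h'
        have hptinj : ∀ z ∈ Sx, ∀ z' ∈ Sx, pt z = pt z' → z = z' := by
          intro z hz z' hz' he
          by_cases h : z = x <;> by_cases h' : z' = x
          · rw [h, h']
          · exfalso
            rcases Finset.mem_insert.1 hz' with h'' | h''
            · exact h' h''
            · simp only [hptdef, if_pos h, if_neg h'] at he
              exact hyS₀ (he ▸ h'')
          · exfalso
            rcases Finset.mem_insert.1 hz with h'' | h''
            · exact h h''
            · simp only [hptdef, if_neg h, if_pos h'] at he
              exact hyS₀ (he.symm ▸ h'')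
          · simpa only [hptdef, if_neg h, if_neg h'] using he
        have hσex : ∀ i : Fin k, ∃ j, t' j = pt (s' i) :=
          fun i => ht'surj _ (hptSy _ (hs'Sx i))
        have hσ : ∀ i, t' ((hσex i).choose) = pt (s' i) := fun i => (hσex i).choose_spec
        set σ : Fin k → Fin k := fun i => (hσex i).choose with hσdef
        have hσinj : Function.Injective σ := by
          intro i j hij
          apply hs'inj
          apply hptinj _ (hs'Sx i) _ (hs'Sx j)
          rw [← hσ i, ← hσ j]
          exact congrArg t' hij
        have cross : ∀ i j (z : V), z ∈ (ga i).2.1.support → z ∈ (gb j).2.1.support →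
            z ∈ S₀ := by
          intro i j z hz1 hz2
          by_contra hzS₀
          obtain ⟨c, u1, hc, hu1sub⟩ := (ga i).2.1.takeUntilP (· = z) ⟨z, hz1, rfl⟩
          obtain ⟨c', u2, hc', hu2sub⟩ := (gb j).2.1.dropUntilLastP (· = z) ⟨z, hz2, rfl⟩
          have hu1S₀ : ∀ v ∈ u1.support, v ∉ S₀ := by
            intro v hv hvS₀
            have hvc : v = c := prop_imp_eq_end_of_tails (u1.mono (fun p q h => h.1)) v
              (by rwa [support_mono]) (Finset.mem_insert_of_mem hvS₀)
            rw [hvc, hc] at hvS₀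
            exact hzS₀ hvS₀
          have hu2S₀ : ∀ v ∈ u2.support, v ∉ S₀ := by
            intro v hv hvS₀
            have hvc : v = c' := prop_imp_eq_start_of_heads (u2.mono (fun p q h => h.1)) v
              (by rwa [support_mono]) (Finset.mem_insert_of_mem hvS₀)
            rw [hvc, hc'] at hvS₀
            exact hzS₀ hvS₀
          obtain ⟨s, hs, hsw⟩ := hS₀cut _ (ha1 i) _ (hb2 j)
            ((((u1.mono (fun p q h => h.1.1)).copy rfl hc).append
              ((u2.mono (fun p q h => h.1.1)).copy hc' rfl)))
          rw [mem_support_append_iff, support_copy, support_copy, support_mono,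
            support_mono] at hsw
          rcases hsw with hsw | hsw
          · exact hu1S₀ s hsw hs
          · exact hu2S₀ s hsw hs
        have build : ∀ i : Fin k, Σ' (w : DWalk R (fa i).1.1 (fb (σ i)).1.2),
            ∀ z ∈ w.support, z ∈ (ga i).2.1.support ∨ z ∈ (gb (σ i)).2.1.support := by
          intro i
          by_cases hsx : s' i = x
          · have hty : t' (σ i) = y := by
              rw [hσ i, hsx]
              simp [hptdef]
            refine ⟨(((ga i).2.1.mono (fun p q h => h.1.1)).copy rfl hsx).append
              (DWalk.cons hxy (((gb (σ i)).2.1.mono (fun p q h => h.1.1)).copy hty rfl)),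
              ?_⟩
            intro z hz
            rw [mem_support_append_iff, support_copy, support_mono, support_cons,
              support_copy, support_mono] at hz
            rcases hz with hz | hz
            · exact Or.inl hz
            · rcases List.mem_cons.1 hz with rfl | hz'
              · exact Or.inl (hsx ▸ (ga i).2.1.end_mem_support)
              · exact Or.inr hz'
          · have hts : t' (σ i) = s' i := by
              rw [hσ i]
              simp [hptdef, hsx]
            refine ⟨((ga i).2.1.mono (fun p q h => h.1.1)).append
              (((gb (σ i)).2.1.mono (fun p q h => h.1.1)).copy hts rfl), ?_⟩
            intro z hz
            rw [mem_support_append_iff, support_mono, support_copy, support_mono] at hz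
            exact hz
        have key : ∀ i' j' : Fin k, ∀ z, z ∈ (ga i').2.1.support →
            z ∈ (gb (σ j')).2.1.support → i' = j' := by
          intro i' j' z hza hzb
          have hzS₀ := cross i' (σ j') z hza hzb
          have he1 : z = s' i' := hgaend i' z hza (Finset.mem_insert_of_mem hzS₀)
          have he2 : z = t' (σ j') := hgbstart (σ j') z hzb (Finset.mem_insert_of_mem hzS₀)
          have hkey : s' i' = pt (s' j') := by rw [← he1, he2, hσ j']
          have hsi'S₀ : s' i' ∈ S₀ := by rw [← he1]; exact hzS₀
          have hsj'x : s' j' ≠ x := by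
            intro hx'
            rw [hx'] at hkey
            simp only [hptdef, if_pos rfl] at hkey
            exact hyS₀ (hkey ▸ hsi'S₀)
          apply hs'inj
          rw [hkey]
          simp [hptdef, hsj'x]
        refine ⟨fun i => ⟨((fa i).1.1, (fb (σ i)).1.2), (build i).1⟩, fun i => ha1 i,
          fun i => hb2 (σ i), ?_⟩
        intro i j hij z hzi hzj
        have h1 := (build i).2 z hzi
        have h2 := (build j).2 z hzj
        rcases h1 with h1 | h1 <;> rcases h2 with h2 | h2
        · exact ha3 i j hij z (hgasub i z h1) (hgasub j z h2)
        · exact hij (key i j z h1 h2)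
        · exact hij ((key j i z h2 h1).symm)
        · exact hb3 (σ i) (σ j) (fun h => hij (hσinj h)) z (hgbsub (σ i) z h1)
            (hgbsub (σ j) z h2)
    · push_neg at harc
      exact dmenger_base (fun p q hpq => harc (p, q) hpq) A B k hsep

end Menger

end MengerAux
namespace MengerAux

section Bridge

open DWalk

variable {V : Type*} [Fintype V] [DecidableEq V] {Γ : SimpleGraph V}

/-- A walk in an induced subgraph yields a walk in the big graph with support in `s`. -/
lemma walk_of_induce {s : Set V} : ∀ {a b : ↥s} (w : (Γ.induce s).Walk a b),
    ∃ w' : Γ.Walk (a : V) (b : V), ∀ x ∈ w'.support, x ∈ s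
  | a, _, SimpleGraph.Walk.nil => ⟨SimpleGraph.Walk.nil, by simp [a.2]⟩
  | a, b, SimpleGraph.Walk.cons h w => by
    obtain ⟨w', hw'⟩ := walk_of_induce w
    refine ⟨SimpleGraph.Walk.cons (by simpa using h) w', ?_⟩
    intro x hx
    rcases (by simpa using hx : x = (a : V) ∨ x ∈ w'.support) with rfl | hx'
    · exact a.2
    · exact hw' x hx'

/-- A walk in `Γ` whose support lies in `s` gives reachability in the induced graph. -/
lemma reachable_induce_of_walk {s : Set V} :
    ∀ {a b : V} (w : Γ.Walk a b) (hs : ∀ x ∈ w.support, x ∈ s),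
      (Γ.induce s).Reachable ⟨a, hs a w.start_mem_support⟩ ⟨b, hs b w.end_mem_support⟩
  | a, _, SimpleGraph.Walk.nil, hs => SimpleGraph.Reachable.refl _
  | a, b, @SimpleGraph.Walk.cons _ _ _ c _ h w, hs => by
    have hs' : ∀ x ∈ w.support, x ∈ s := fun x hx => hs x (by simp [hx])
    have h1 : (Γ.induce s).Adj ⟨a, hs a (by simp)⟩ ⟨c, hs' c w.start_mem_support⟩ := by
      simpa using h
    exact h1.reachable.trans (reachable_induce_of_walk w hs')

lemma head_decomp {a b : V} (w : Γ.Walk a b) (hne : a ≠ b) :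
    ∃ (c : V) (hc : Γ.Adj a c) (q : Γ.Walk c b), w = SimpleGraph.Walk.cons hc q := by
  cases w with
  | nil => exact absurd rfl hne
  | cons h q => exact ⟨_, h, q, rfl⟩

/-- Decompose a `u`-`v` path (with `u,v` non-adjacent) into first edge, middle part,
last edge; the middle part avoids `u` and `v`. -/
lemma middle_decomp {u v : V} (huv : u ≠ v) (hadj : ¬ Γ.Adj u v)
    (w : Γ.Walk u v) (hw : w.IsPath) :
    ∃ (c d : V) (_ : Γ.Adj u c) (_ : Γ.Adj v d) (m : Γ.Walk c d),
      ∀ x ∈ m.support, x ∈ w.support ∧ x ≠ u ∧ x ≠ v := by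
  obtain ⟨c, hc, q, rfl⟩ := head_decomp w huv
  rw [SimpleGraph.Walk.cons_isPath_iff] at hw
  obtain ⟨hqpath, huq⟩ := hw
  have hcv : c ≠ v := fun h => hadj (h ▸ hc)
  obtain ⟨d, hd, r, hqr⟩ := head_decomp q.reverse (Ne.symm hcv)
  have hqrr : q = (SimpleGraph.Walk.cons hd r).reverse := by
    rw [← hqr, SimpleGraph.Walk.reverse_reverse]
  have hqsupp : ∀ x, x ∈ q.support ↔ x = v ∨ x ∈ r.support := by
    intro x
    rw [hqrr, SimpleGraph.Walk.support_reverse]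
    simp [or_comm]
  have hvr : v ∉ r.support := by
    have : (SimpleGraph.Walk.cons hd r).IsPath := by
      rw [← hqr]; exact hqpath.reverse
    exact (SimpleGraph.Walk.cons_isPath_iff _ _).1 this |>.2
  refine ⟨c, d, hc, hd, r.reverse, ?_⟩
  intro x hx
  rw [SimpleGraph.Walk.support_reverse, List.mem_reverse] at hx
  have hxq : x ∈ q.support := (hqsupp x).2 (Or.inr hx)
  refine ⟨by simp [hxq], fun h => huq (h ▸ hxq), fun h => hvr (h ▸ hx)⟩

variable (Γ) in
/-- The relation on `V` given by adjacency avoiding `u` and `v`. -/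
def Rg (u v : V) : V → V → Prop :=
  fun p q => Γ.Adj p q ∧ p ≠ u ∧ p ≠ v ∧ q ≠ u ∧ q ≠ v

lemma Rg_support_avoid {u v : V} : ∀ {a b : V} (w : DWalk (Rg Γ u v) a b),
    a ≠ u → a ≠ v → ∀ x ∈ w.support, x ≠ u ∧ x ≠ v
  | _, _, DWalk.nil a, hu, hv, x, hx => by
    obtain rfl : x = a := by simpa using hx
    exact ⟨hu, hv⟩
  | _, _, DWalk.cons h w, hu, hv, x, hx => by
    rcases (by simpa using hx : x = _ ∨ x ∈ w.support) with rfl | hx'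
    · exact ⟨hu, hv⟩
    · exact Rg_support_avoid w h.2.2.2.1 h.2.2.2.2 x hx'

/-- Convert a `Γ`-walk avoiding `u, v` into an `Rg`-walk. -/
lemma toDWalk {u v : V} : ∀ {a b : V} (w : Γ.Walk a b),
    (∀ x ∈ w.support, x ≠ u ∧ x ≠ v) →
    ∃ w' : DWalk (Rg Γ u v) a b, ∀ x, x ∈ w'.support ↔ x ∈ w.support
  | _, _, SimpleGraph.Walk.nil, _ => ⟨DWalk.nil _, by simp⟩
  | a, b, @SimpleGraph.Walk.cons _ _ _ c _ h w, havoid => by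
    have hc : c ∈ (SimpleGraph.Walk.cons h w).support := by simp [w.start_mem_support]
    obtain ⟨w', hw'⟩ := toDWalk w (fun x hx => havoid x (by simp [hx]))
    refine ⟨DWalk.cons ⟨h, (havoid a (by simp)).1, (havoid a (by simp)).2,
      (havoid c hc).1, (havoid c hc).2⟩ w', ?_⟩
    intro x
    change x ∈ a :: w'.support ↔ _
    simp [hw' x]

/-- Convert an `Rg`-walk into a `Γ`-walk. -/
lemma ofDWalk {u v : V} : ∀ {a b : V} (w : DWalk (Rg Γ u v) a b),
    ∃ w' : Γ.Walk a b, ∀ x, x ∈ w'.support ↔ x ∈ w.support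
  | _, _, DWalk.nil a => ⟨SimpleGraph.Walk.nil, by simp⟩
  | _, _, DWalk.cons h w => by
    obtain ⟨w', hw'⟩ := ofDWalk w
    exact ⟨SimpleGraph.Walk.cons h.1 w', fun x => by simp [hw' x]⟩

/-- Menger-type statement for simple graphs. -/
theorem menger_graph (Γ : SimpleGraph V) (u v : V) (huv : u ≠ v) (hadj : ¬ Γ.Adj u v)
    (k : ℕ)
    (hcut : ∀ S : Finset V, u ∉ S → v ∉ S →
      (∀ w : Γ.Walk u v, ∃ s ∈ S, s ∈ w.support) → k ≤ S.card) :
    HasIndepPaths Γ u v k := by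
  classical
  have hsep : ∀ S : Finset V, Cuts (Rg Γ u v) (Γ.neighborFinset u) (Γ.neighborFinset v) S →
      k ≤ S.card := by
    intro S hS
    have hS' : Cuts (Rg Γ u v) (Γ.neighborFinset u) (Γ.neighborFinset v) (S \ {u, v}) := by
      intro a ha b hb w
      obtain ⟨s, hs, hsw⟩ := hS a ha b hb w
      have hau : a ≠ u := fun h => Γ.irrefl (h ▸ (Γ.mem_neighborFinset u a).1 ha)
      have hav : a ≠ v := fun h => hadj (h ▸ (Γ.mem_neighborFinset u a).1 ha)
      have havo := Rg_support_avoid w hau hav s hsw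
      exact ⟨s, Finset.mem_sdiff.2 ⟨hs, by simp [havo.1, havo.2]⟩, hsw⟩
    have hk : k ≤ (S \ {u, v}).card := by
      apply hcut _ (by simp) (by simp [huv])
      intro w
      obtain ⟨c, d, hc, hd, m, hm⟩ := middle_decomp huv hadj (w.toPath : Γ.Walk u v)
        (w.toPath.2)
      obtain ⟨m', hm'⟩ := toDWalk m (fun x hx => (hm x hx).2)
      obtain ⟨s, hs, hsw⟩ := hS' c ((Γ.mem_neighborFinset u c).2 hc)
        d ((Γ.mem_neighborFinset v d).2 hd) m'
      refine ⟨s, hs, ?_⟩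
      exact SimpleGraph.Walk.support_toPath_subset w ((hm s ((hm' s).1 hsw)).1)
    calc k ≤ (S \ {u, v}).card := hk
    _ ≤ S.card := Finset.card_le_card Finset.sdiff_subset
  obtain ⟨f, ha1, hb1, hdisj⟩ := dmenger ({p : V × V | (Rg Γ u v) p.1 p.2}.ncard)
    (Rg Γ u v) le_rfl (Γ.neighborFinset u) (Γ.neighborFinset v) k hsep
  -- convert each directed walk into a graph walk and attach the endpoints
  have conv := fun i : Fin k => ofDWalk (f i).2
  choose m hmsupp using conv
  have hadju : ∀ i, Γ.Adj u (f i).1.1 := fun i => (Γ.mem_neighborFinset _ _).1 (ha1 i)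
  have hadjv : ∀ i, Γ.Adj (f i).1.2 v := fun i =>
    ((Γ.mem_neighborFinset _ _).1 (hb1 i)).symm
  have havoid : ∀ i, ∀ x ∈ (m i).support, x ≠ u ∧ x ≠ v := by
    intro i x hx
    have hau : (f i).1.1 ≠ u := fun h => Γ.irrefl (h ▸ hadju i)
    have hav : (f i).1.1 ≠ v := fun h => hadj (h ▸ hadju i)
    exact Rg_support_avoid (f i).2 hau hav x ((hmsupp i x).1 hx)
  set W : ∀ i : Fin k, Γ.Walk u v :=
    fun i => SimpleGraph.Walk.cons (hadju i) ((m i).concat (hadjv i)) with hWdef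
  have hWsupp : ∀ i x, x ∈ (W i).support → x = u ∨ x = v ∨ x ∈ (m i).support := by
    intro i x hx
    rw [hWdef] at hx
    simp only [SimpleGraph.Walk.support_cons, SimpleGraph.Walk.support_concat,
      List.concat_eq_append, List.mem_cons, List.mem_append,
      List.mem_singleton] at hx
    tauto
  refine ⟨fun i => ((W i).toPath : Γ.Walk u v), fun i => (W i).toPath.2, ?_⟩
  intro i j hij x hxi hxj
  have h1 := hWsupp i x (SimpleGraph.Walk.support_toPath_subset _ hxi)
  have h2 := hWsupp j x (SimpleGraph.Walk.support_toPath_subset _ hxj)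
  rcases h1 with rfl | rfl | h1
  · exact Or.inl rfl
  · exact Or.inr rfl
  · rcases h2 with rfl | rfl | h2
    · exact absurd rfl (havoid i x h1).1
    · exact absurd rfl (havoid i x h1).2
    · exact absurd ((hmsupp j x).1 h2) (hdisj i j hij x ((hmsupp i x).1 h1))

end Bridge

end MengerAux

open MengerAux in
theorem stmt2 (G : Type*) [Group G] [Finite G] (k : ℕ)
    (hcard : k < Nat.card {H : Subgroup G // H ≠ ⊥ ∧ H ≠ ⊤}) :
    KConnected (interGraph G) k ↔
      ∀ A B : {H : Subgroup G // H ≠ ⊥ ∧ H ≠ ⊤}, A ≠ B →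
        IsMinimalSubgroup A.1 → IsMinimalSubgroup B.1 →
        HasIndepPaths (interGraph G) A B k := by
  classical
  haveI : Finite (Subgroup G) :=
    Finite.of_injective (fun K : Subgroup G => (K : Set G)) SetLike.coe_injective
  haveI : Fintype {H : Subgroup G // H ≠ ⊥ ∧ H ≠ ⊤} := Fintype.ofFinite _
  -- existence of minimal subgroups below a nontrivial subgroup
  have hexmin : ∀ H : Subgroup G, H ≠ ⊥ → ∃ M : Subgroup G, M ≤ H ∧ IsMinimalSubgroup M := by
    intro H hH
    obtain ⟨M, hMH, hMmin⟩ := exists_minimal_le_of_wellFoundedLT (fun K : Subgroup G => K ≠ ⊥) H hH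
    exact ⟨M, hMH, hMmin.1, fun K hK hKM => le_antisymm hKM (hMmin.2 hK hKM)⟩
  constructor
  · rintro ⟨hlt, hsep⟩ A B hAB hminA hminB
    have hbot : A.1 ⊓ B.1 = ⊥ := by
      by_contra hne
      have h1 : A.1 ⊓ B.1 = A.1 := hminA.2 _ hne inf_le_left
      have h2 : A.1 ⊓ B.1 = B.1 := hminB.2 _ hne inf_le_right
      exact hAB (Subtype.ext (by rw [← h1]; exact h2))
    have hadj : ¬ (interGraph G).Adj A B := fun h => h.2 hbot
    apply menger_graph _ A B hAB hadj
    intro S huS hvS hwalks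
    have hIs : IsSepSet (interGraph G) ↑S := by
      refine ⟨⟨A, by simpa using huS⟩, ⟨B, by simpa using hvS⟩, ?_⟩
      intro hreach
      obtain ⟨wr⟩ := hreach
      obtain ⟨w', hw'⟩ := walk_of_induce wr
      obtain ⟨s, hs, hsw⟩ := hwalks w'
      exact absurd (hw' s hsw) (by simpa using hs)
    have hle := hsep _ hIs
    rwa [Nat.card_coe_set_eq, Set.ncard_coe_finset] at hle
  · intro hpaths
    refine ⟨hcard, ?_⟩
    intro S hS
    obtain ⟨a, b, hnr⟩ := hS
    have hab : (a : {H : Subgroup G // H ≠ ⊥ ∧ H ≠ ⊤}) ≠ (b : _) := by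
      intro h
      exact hnr (Subtype.ext h ▸ SimpleGraph.Reachable.refl a)
    have hnadj : ¬ (interGraph G).Adj ↑a ↑b := by
      intro h
      exact hnr (SimpleGraph.Adj.reachable (by simpa using h :
        ((interGraph G).induce Sᶜ).Adj a b))
    have hbot : (a : _).1.1 ⊓ (b : _).1.1 = ⊥ := by
      by_contra h
      exact hnadj ⟨hab, h⟩
    obtain ⟨A₀, hA₀le, hA₀min⟩ := hexmin (a : _).1.1 (a : _).1.2.1
    obtain ⟨B₀, hB₀le, hB₀min⟩ := hexmin (b : _).1.1 (b : _).1.2.1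
    have hA₀top : A₀ ≠ ⊤ := fun h =>
      (a : _).1.2.2 (top_le_iff.1 (h ▸ hA₀le))
    have hB₀top : B₀ ≠ ⊤ := fun h =>
      (b : _).1.2.2 (top_le_iff.1 (h ▸ hB₀le))
    set Av : {H : Subgroup G // H ≠ ⊥ ∧ H ≠ ⊤} := ⟨A₀, hA₀min.1, hA₀top⟩ with hAvdef
    set Bv : {H : Subgroup G // H ≠ ⊥ ∧ H ≠ ⊤} := ⟨B₀, hB₀min.1, hB₀top⟩ with hBvdef
    have hAvBv : Av ≠ Bv := by
      intro h
      have : A₀ = B₀ := congrArg Subtype.val h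
      have hle : A₀ ≤ (a : _).1.1 ⊓ (b : _).1.1 := le_inf hA₀le (this ▸ hB₀le)
      rw [hbot, le_bot_iff] at hle
      exact hA₀min.1 hle
    have hAvBvadj : ¬ (interGraph G).Adj Av Bv := by
      rintro ⟨-, h2⟩
      have hA : A₀ ⊓ B₀ = A₀ := hA₀min.2 _ h2 inf_le_left
      have hB : A₀ ⊓ B₀ = B₀ := hB₀min.2 _ h2 inf_le_right
      exact hAvBv (Subtype.ext (show A₀ = B₀ by rw [← hA]; exact hB))
    obtain ⟨p, hppath, hindep⟩ := hpaths Av Bv hAvBv ⟨hA₀min.1, hA₀min.2⟩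
      ⟨hB₀min.1, hB₀min.2⟩
    -- every path must contain an internal vertex of S
    have hhit : ∀ i : Fin k, ∃ s, s ∈ S ∧ s ∈ (p i).support ∧ s ≠ Av ∧ s ≠ Bv := by
      intro i
      by_contra hno
      push_neg at hno
      obtain ⟨c, d, hc, hd, m, hm⟩ := middle_decomp hAvBv hAvBvadj (p i) (hppath i)
      -- support of m avoids S
      have hmS : ∀ x ∈ m.support, x ∈ Sᶜ := by
        intro x hx hxS
        obtain ⟨hx1, hx2, hx3⟩ := hm x hx
        exact hx3 (hno x hxS hx1 hx2)
      -- c contains A₀, d contains B₀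
      have hcA : A₀ ≤ c.1 := by
        have h2 := hc.2
        have := hA₀min.2 _ h2 inf_le_left
        exact le_of_eq_of_le this.symm inf_le_right
      have hdB : B₀ ≤ d.1 := by
        have h2 := hd.2
        have := hB₀min.2 _ h2 inf_le_left
        exact le_of_eq_of_le this.symm inf_le_right
      -- connect a to c inside Sᶜ
      have hcS : (c : _) ∈ Sᶜ := hmS c m.start_mem_support
      have hdS : (d : _) ∈ Sᶜ := hmS d m.end_mem_support
      have hreach1 : ((interGraph G).induce Sᶜ).Reachable a ⟨c, hcS⟩ := by
        by_cases hac : (a : _) = c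
        · have heq : a = (⟨c, hcS⟩ : ↥Sᶜ) := Subtype.ext hac
          rw [heq]
        · refine SimpleGraph.Adj.reachable ?_
          have : (interGraph G).Adj ↑a c := by
            refine ⟨hac, ?_⟩
            intro hbot'
            have : A₀ ≤ (a : _).1.1 ⊓ c.1 := le_inf hA₀le hcA
            rw [hbot', le_bot_iff] at this
            exact hA₀min.1 this
          simpa using this
      have hreach2 : ((interGraph G).induce Sᶜ).Reachable ⟨c, hcS⟩ ⟨d, hdS⟩ :=
        reachable_induce_of_walk m hmS
      have hreach3 : ((interGraph G).induce Sᶜ).Reachable ⟨d, hdS⟩ b := by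
        by_cases hbd : (b : _) = d
        · have heq : b = (⟨d, hdS⟩ : ↥Sᶜ) := Subtype.ext hbd
          rw [heq]
        · refine (SimpleGraph.Adj.reachable ?_).symm
          have : (interGraph G).Adj ↑b d := by
            refine ⟨hbd, ?_⟩
            intro hbot'
            have : B₀ ≤ (b : _).1.1 ⊓ d.1 := le_inf hB₀le hdB
            rw [hbot', le_bot_iff] at this
            exact hB₀min.1 this
          simpa using this
      exact hnr ((hreach1.trans hreach2).trans hreach3)
    choose s hsS hssupp hsAv hsBv using hhit
    have hinj : Function.Injective s := by
      intro i j hij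
      by_contra hne
      rcases hindep i j hne (s i) (hssupp i) (hij ▸ hssupp j) with h | h
      · exact hsAv i h
      · exact hsBv i h
    have : Nat.card (Fin k) ≤ Nat.card ↥S :=
      Nat.card_le_card_of_injective (fun i => (⟨s i, hsS i⟩ : ↥S))
        (fun i j h => hinj (congrArg Subtype.val h))
    simpa using this
end

section
/- Let G be a finite non-simple group whose intersection graph Γ(G) is disconnected, and let A be a proper non-trivial subgroup lying in a different connected component of Γ(G) than a minimal normal subgroup N of G. Then G = N ⋊ A with N ∩ A = 1, |A| is prime, and A is a maximal subgroup of G. -/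
private lemma card_sup_of_disj {G : Type*} [Group G] [Finite G] (N B : Subgroup G)
    (hN : N.Normal) (h : N ⊓ B = ⊥) :
    Nat.card ↥(N ⊔ B) = Nat.card N * Nat.card B := by
  haveI := hN
  have h1 : N.relIndex (N ⊔ B) = Nat.card B := by
    rw [Subgroup.relIndex_sup_left, ← Subgroup.inf_relIndex_right, h,
      Subgroup.relIndex_bot_left]
  have h2 : Nat.card (N.subgroupOf (N ⊔ B)) * (N.subgroupOf (N ⊔ B)).index
      = Nat.card ↥(N ⊔ B) := Subgroup.card_mul_index _
  have h3 : Nat.card (N.subgroupOf (N ⊔ B)) = Nat.card N :=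
    Nat.card_congr (Subgroup.subgroupOfEquivOfLe le_sup_left).toEquiv
  rw [← h2, h3, show (N.subgroupOf (N ⊔ B)).index = N.relIndex (N ⊔ B) from rfl, h1]

theorem stmt5 (G : Type*) [Group G] [Finite G] (hns : ¬ IsSimpleGroup G)
    (N A : {H : Subgroup G // H ≠ ⊥ ∧ H ≠ ⊤})
    (hN : N.1.Normal)
    (hmin : ∀ K : Subgroup G, K.Normal → K ≠ ⊥ → K ≤ N.1 → K = N.1)
    (hdis : ¬ (interGraph G).Reachable N A) :
    N.1 ⊔ A.1 = ⊤ ∧ N.1 ⊓ A.1 = ⊥ ∧ (Nat.card A.1).Prime ∧ IsCoatom A.1 := by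
  obtain ⟨hNbot, hNtop⟩ := N.2
  obtain ⟨hAbot, hAtop⟩ := A.2
  have hNA : N ≠ A := fun h => hdis (h ▸ SimpleGraph.Reachable.refl _)
  have hinf : N.1 ⊓ A.1 = ⊥ := by
    by_contra h
    exact hdis (SimpleGraph.Adj.reachable ⟨hNA, h⟩)
  -- key : for any nontrivial B ≤ A, N ⊔ B = ⊤
  have key : ∀ B : Subgroup G, B ≠ ⊥ → B ≤ A.1 → N.1 ⊔ B = ⊤ := by
    intro B hB hBA
    by_contra htop
    have hMbot : N.1 ⊔ B ≠ ⊥ := fun h => hNbot (le_bot_iff.mp (le_trans le_sup_left h.le))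
    set M : {H : Subgroup G // H ≠ ⊥ ∧ H ≠ ⊤} := ⟨N.1 ⊔ B, hMbot, htop⟩ with hMdef
    have adj1 : (interGraph G).Adj N M := by
      refine ⟨fun h => ?_, ?_⟩
      · -- N = M means B ≤ N, so B ≤ N ⊓ A = ⊥
        have hBN : B ≤ N.1 := by
          have h' : N.1 = N.1 ⊔ B := congrArg Subtype.val h
          exact le_trans le_sup_right h'.ge
        exact hB (le_bot_iff.mp (le_trans (le_inf hBN hBA) hinf.le))
      · have : N.1 ⊓ M.1 = N.1 := inf_eq_left.mpr le_sup_left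
        rw [this]; exact hNbot
    have adj2 : (interGraph G).Adj M A := by
      refine ⟨fun h => ?_, fun h0 => ?_⟩
      · -- M = A would give N ≤ A, so N ⊓ A = N ≠ ⊥
        have hNA' : N.1 ≤ A.1 := by
          have h' : N.1 ⊔ B = A.1 := congrArg Subtype.val h
          exact le_trans le_sup_left h'.le
        exact hNbot (le_bot_iff.mp (le_trans (le_inf le_rfl hNA') hinf.le))
      · exact hB (le_bot_iff.mp (le_trans (le_inf le_sup_right hBA) h0.le))
    exact hdis (adj1.reachable.trans adj2.reachable)
  have hsup : N.1 ⊔ A.1 = ⊤ := key A.1 hAbot le_rfl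
  have hcNpos : 0 < Nat.card N.1 := Nat.card_pos
  have hcard : Nat.card G = Nat.card N.1 * Nat.card A.1 := by
    have := card_sup_of_disj N.1 A.1 hN hinf
    rw [hsup] at this
    rw [← this]
    exact Nat.card_congr Subgroup.topEquiv.toEquiv.symm
  -- A is a minimal subgroup
  have hminA : ∀ B : Subgroup G, B ≠ ⊥ → B ≤ A.1 → B = A.1 := by
    intro B hB hBA
    have hinfB : N.1 ⊓ B = ⊥ :=
      le_bot_iff.mp (le_trans (inf_le_inf_left _ hBA) hinf.le)
    have h1 := card_sup_of_disj N.1 B hN hinfB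
    rw [key B hB hBA] at h1
    have h2 : Nat.card G = Nat.card N.1 * Nat.card B := by
      rw [← h1]; exact Nat.card_congr Subgroup.topEquiv.toEquiv.symm
    have h3 : Nat.card A.1 ≤ Nat.card B := by
      have h2' : Nat.card N.1 * Nat.card B = Nat.card N.1 * Nat.card A.1 :=
        h2.symm.trans hcard
      have h4 : Nat.card B = Nat.card A.1 := Nat.eq_of_mul_eq_mul_left hcNpos h2'
      exact h4.ge
    exact Subgroup.eq_of_le_of_card_ge hBA h3
  -- |A| is prime
  have hprime : (Nat.card A.1).Prime := by
    have hnt : Nat.card A.1 ≠ 1 := by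
      intro h
      exact hAbot (Subgroup.eq_bot_of_card_eq _ h)
    obtain ⟨p, hp, hpdvd⟩ := Nat.exists_prime_and_dvd hnt
    haveI : Fact p.Prime := ⟨hp⟩
    obtain ⟨g, hg⟩ := exists_prime_orderOf_dvd_card' (G := A.1) p hpdvd
    have hzle : Subgroup.zpowers (g : G) ≤ A.1 := by
      rw [Subgroup.zpowers_le]; exact g.2
    have hzbot : Subgroup.zpowers (g : G) ≠ ⊥ := by
      intro h
      have hg1 : (g : G) = 1 := by
        have := Subgroup.mem_zpowers (g : G)
        rw [h, Subgroup.mem_bot] at this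
        exact this
      have : g = 1 := Subtype.ext hg1
      rw [this, orderOf_one] at hg
      exact hp.ne_one hg.symm
    have heq := hminA _ hzbot hzle
    have : Nat.card A.1 = orderOf (g : G) := by
      have hcc : Nat.card ↥(Subgroup.zpowers (g : G)) = Nat.card ↥(A.1) :=
        congrArg (fun H : Subgroup G => Nat.card ↥H) heq
      rw [← hcc]
      exact Nat.card_zpowers _
    rw [this, orderOf_submonoid g, hg]
    exact hp
  refine ⟨hsup, hinf, hprime, hAtop, fun M hM => ?_⟩
  by_contra hMtop
  have hMbot : M ≠ ⊥ := fun h => hAbot (le_bot_iff.mp (le_trans hM.le h.le))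
  set Mv : {H : Subgroup G // H ≠ ⊥ ∧ H ≠ ⊤} := ⟨M, hMbot, hMtop⟩ with hMvdef
  have hinfM : N.1 ⊓ M = ⊥ := by
    by_contra h0
    have adj1 : (interGraph G).Adj N Mv := by
      refine ⟨fun h => ?_, h0⟩
      have hAN : A.1 ≤ N.1 := by
        have h' : N.1 = M := congrArg Subtype.val h
        exact le_trans hM.le h'.ge
      exact hAbot (le_bot_iff.mp (le_trans (le_inf hAN le_rfl) hinf.le))
    have adj2 : (interGraph G).Adj Mv A := by
      refine ⟨fun h => ?_, fun h0' => ?_⟩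
      · exact hM.ne' (congrArg Subtype.val h)
      · exact hAbot (le_bot_iff.mp (le_trans (le_inf hM.le le_rfl) h0'.le))
    exact hdis (adj1.reachable.trans adj2.reachable)
  have h1 := card_sup_of_disj N.1 M hN hinfM
  have h2 : Nat.card ↥(N.1 ⊔ M) ≤ Nat.card G := Subgroup.card_le_card_group _
  rw [h1, hcard] at h2
  have h3 : Nat.card M ≤ Nat.card A.1 := Nat.le_of_mul_le_mul_left h2 hcNpos
  exact hM.ne (Subgroup.eq_of_le_of_card_ge hM.le h3)
end

section
/- Let G be a finite group of the form G = N ⋊ A where N is a minimal normal subgroup which is an elementary abelian p-group, A ≅ ℤ_q with q a prime distinct from p, and N_G(A) = A. Then every proper non-trivial subgroup of G is either contained in N or is a Sylow q-subgroup of G; consequently the intersection graph Γ(G) is disconnected. -/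
theorem stmt6 (G : Type*) [Group G] [Finite G] (p q : ℕ) (hp : p.Prime) (hq : q.Prime)
    (hpq : p ≠ q) (N A : Subgroup G) (hN : N.Normal)
    (hminN : ∀ K : Subgroup G, K.Normal → K ≠ ⊥ → K ≤ N → K = N)
    (helem1 : ∀ x : N, x ^ p = 1) (helem2 : ∀ x y : N, x * y = y * x)
    (hA : Nat.card A = q) (hnorm : Subgroup.normalizer (A : Set G) = A)
    (hinf : N ⊓ A = ⊥) (hsup : N ⊔ A = ⊤) :
    (∀ H : Subgroup G, H ≠ ⊥ → H ≠ ⊤ → H ≤ N ∨ ∃ Q : Sylow q G, H = ↑Q) ∧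
      ¬ (interGraph G).Connected := by
  classical
  set f := QuotientGroup.mk' N with hf
  have hker : f.ker = N := QuotientGroup.ker_mk' N
  have hsurj : Function.Surjective f := QuotientGroup.mk'_surjective N
  have hAbot : A ≠ ⊥ := by
    intro h
    rw [h, Subgroup.card_bot] at hA
    exact hq.one_lt.ne hA
  have hNtop : N ≠ ⊤ := by
    intro h
    rw [h, top_inf_eq] at hinf
    exact hAbot hinf
  have hmapA : A.map f = ⊤ := by
    have h1 : (N ⊔ A).map f = N.map f ⊔ A.map f := Subgroup.map_sup N A f
    rw [hsup] at h1
    have h2 : (⊤ : Subgroup G).map f = ⊤ := by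
      rw [Subgroup.map_top_of_surjective f hsurj]
    have h3 : N.map f = ⊥ := by
      rw [Subgroup.map_eq_bot_iff, hker]
    rw [h2, h3, bot_sup_eq] at h1
    exact h1.symm
  have hcardQuot : Nat.card (G ⧸ N) = q := by
    have hdvd : Nat.card (G ⧸ N) ∣ Nat.card A := by
      apply Subgroup.card_dvd_of_surjective (f.comp A.subtype)
      intro y
      obtain ⟨x, rfl⟩ := hsurj y
      have : f x ∈ A.map f := by rw [hmapA]; trivial
      obtain ⟨a, ha, hfa⟩ := this
      exact ⟨⟨a, ha⟩, hfa⟩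
    rw [hA] at hdvd
    rcases (Nat.dvd_prime hq).mp hdvd with h1 | h1
    · exfalso
      have : N.index = 1 := h1
      exact hNtop (Subgroup.index_eq_one.mp this)
    · exact h1
  haveI hFq : Fact (Nat.card (G ⧸ N)).Prime := ⟨hcardQuot ▸ hq⟩
  have hdisj : ∀ Q : Subgroup G, IsPGroup q Q → Q ⊓ N = ⊥ := by
    intro Q hQ
    rw [eq_bot_iff]
    rintro x ⟨hxQ, hxN⟩
    obtain ⟨n, hn⟩ := hQ ⟨x, hxQ⟩
    have hxqn : x ^ q ^ n = 1 := by
      have := congrArg (Subgroup.subtype Q) hn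
      simpa using this
    have hxp : x ^ p = 1 := by
      have := congrArg (Subgroup.subtype N) (helem1 ⟨x, hxN⟩)
      simpa using this
    have h1 : orderOf x ∣ p := orderOf_dvd_of_pow_eq_one hxp
    have h2 : orderOf x ∣ q ^ n := orderOf_dvd_of_pow_eq_one hxqn
    have hcop : Nat.Coprime p (q ^ n) :=
      (Nat.coprime_primes hp hq |>.mpr hpq).pow_right n
    have h3 : orderOf x ∣ Nat.gcd p (q ^ n) := Nat.dvd_gcd h1 h2
    rw [hcop] at h3
    have hx1 : x = 1 := orderOf_eq_one_iff.mp (Nat.dvd_one.mp h3)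
    simp [hx1]
  have hFinQuot : Finite (G ⧸ N) := Quotient.finite _
  have hcard_le : ∀ Q : Subgroup G, Q ⊓ N = ⊥ → Nat.card Q ≤ q := by
    intro Q hQ
    have hinj : Function.Injective (f.comp Q.subtype) := by
      rw [← MonoidHom.ker_eq_bot_iff, eq_bot_iff]
      intro x hx
      have hx' : (x : G) ∈ f.ker := hx
      rw [hker] at hx'
      have : (x : G) ∈ Q ⊓ N := ⟨x.2, hx'⟩
      rw [hQ] at this
      exact Subtype.ext this
    calc Nat.card Q ≤ Nat.card (G ⧸ N) := Nat.card_le_card_of_injective _ hinj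
    _ = q := hcardQuot
  have key : ∀ H : Subgroup G, H ≠ ⊥ → H ≠ ⊤ → H ≤ N ∨ ∃ Q : Sylow q G, H = ↑Q := by
    intro H hHbot hHtop
    rcases (H.map f).eq_bot_or_eq_top_of_prime_card with hm | hm
    · left
      intro x hx
      have : f x ∈ H.map f := ⟨x, hx, rfl⟩
      rw [hm, Subgroup.mem_bot] at this
      have : x ∈ f.ker := this
      rwa [hker] at this
    · right
      have hsupHN : H ⊔ N = ⊤ := by
        have h1 : Subgroup.comap f (H.map f) = H ⊔ f.ker := Subgroup.comap_map_eq f H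
        rw [hm, hker, Subgroup.comap_top] at h1
        exact h1.symm
      have hKnorm : (H ⊓ N).Normal := by
        rw [← Subgroup.normalizer_eq_top_iff]
        rw [eq_top_iff, ← hsupHN, sup_le_iff]
        constructor
        · intro h hh
          rw [Subgroup.mem_normalizer_iff]
          intro x
          constructor
          · rintro ⟨hxH, hxN⟩
            exact ⟨H.mul_mem (H.mul_mem hh hxH) (H.inv_mem hh), hN.conj_mem x hxN h⟩
          · rintro ⟨hxH, hxN⟩
            have h1 : h⁻¹ * (h * x * h⁻¹) * h⁻¹⁻¹ ∈ H := H.mul_mem (H.mul_mem (H.inv_mem hh) hxH) (H.inv_mem (H.inv_mem hh))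
            have h2 := hN.conj_mem _ hxN h⁻¹
            group at h1 h2 ⊢
            exact ⟨h1, h2⟩
        · intro n hn
          rw [Subgroup.mem_normalizer_iff]
          intro x
          have hcomm : ∀ y ∈ N, n * y = y * n := by
            intro y hy
            have := congrArg (Subgroup.subtype N) (helem2 ⟨n, hn⟩ ⟨y, hy⟩)
            simpa using this
          constructor
          · rintro ⟨hxH, hxN⟩
            have : n * x * n⁻¹ = x := by
              rw [hcomm x hxN]; group
            rw [this]; exact ⟨hxH, hxN⟩
          · rintro ⟨hxH, hxN⟩
            have hxN' : x ∈ N := by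
              have h2 := N.mul_mem (N.mul_mem (N.inv_mem hn) hxN) hn
              group at h2
              exact h2
            have hx : n * x * n⁻¹ = x := by rw [hcomm x hxN']; group
            rw [hx] at hxH
            exact ⟨hxH, hxN'⟩
      have hKbot : H ⊓ N = ⊥ := by
        by_contra hc
        have := hminN _ hKnorm hc inf_le_right
        have hNH : N ≤ H := this ▸ inf_le_left
        rw [sup_eq_left.mpr hNH] at hsupHN
        exact hHtop hsupHN
      have hcardH : Nat.card H = q := by
        refine le_antisymm (hcard_le H hKbot) ?_
        have hsur : Function.Surjective (f.comp H.subtype) := by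
          intro y
          have : y ∈ H.map f := by rw [hm]; trivial
          obtain ⟨h, hh, hfh⟩ := this
          exact ⟨⟨h, hh⟩, hfh⟩
        calc q = Nat.card (G ⧸ N) := hcardQuot.symm
        _ ≤ Nat.card H := Nat.card_le_card_of_surjective _ hsur
      have hpH : IsPGroup q H := IsPGroup.of_card (by rw [hcardH, pow_one])
      refine ⟨⟨H, hpH, ?_⟩, rfl⟩
      intro Q hQ hHQ
      have hQN : Q ⊓ N = ⊥ := hdisj Q hQ
      have hQle : Nat.card Q ≤ Nat.card H := hcardH ▸ hcard_le Q hQN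
      exact (Subgroup.eq_of_le_of_card_ge hHQ hQle).symm
  refine ⟨key, ?_⟩
  -- A is nontrivial, and every vertex adjacent to A equals A; also handle N = ⊥ case
  intro hconn
  by_cases hNbot : N = ⊥
  · -- G has prime order q; no proper non-trivial subgroups exist
    have hAtop : A = ⊤ := by rw [← hsup, hNbot, bot_sup_eq]
    have : IsEmpty {H : Subgroup G // H ≠ ⊥ ∧ H ≠ ⊤} := by
      constructor
      rintro ⟨H, h1, h2⟩
      rcases key H h1 h2 with h | ⟨Q, rfl⟩
      · exact h1 (le_bot_iff.mp (hNbot ▸ h))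
      · -- Q is a q-group, so Q ⊓ N = ⊥ and card Q ≤ q; but also A ≤ ... contradiction:
        have hpA : IsPGroup q A := IsPGroup.of_card (by rw [hA, pow_one])
        have hQA : (A : Subgroup G) = ↑Q := Q.3 hpA (hAtop ▸ le_top)
        exact h2 (hQA ▸ hAtop)
    obtain ⟨v⟩ := hconn.nonempty
    exact this.false v
  · have hAtop : A ≠ ⊤ := by
      intro h
      rw [h, inf_top_eq] at hinf
      exact hNbot hinf
    have hANe : A ≠ N := by
      intro h
      rw [← h, inf_idem] at hinf
      exact hAbot hinf
    set vA : {H : Subgroup G // H ≠ ⊥ ∧ H ≠ ⊤} := ⟨A, hAbot, hAtop⟩ with hvA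
    set vN : {H : Subgroup G // H ≠ ⊥ ∧ H ≠ ⊤} := ⟨N, hNbot, hNtop⟩ with hvN
    have hiso : ∀ B, ¬ (interGraph G).Adj vA B := by
      rintro ⟨B, hBbot, hBtop⟩ ⟨hne, hint⟩
      simp only [hvA] at hint
      have hAB : A ≤ B := by
        have hd := Subgroup.card_dvd_of_le (inf_le_left : A ⊓ B ≤ A)
        rw [hA] at hd
        rcases (Nat.dvd_prime hq).mp hd with h1 | h1
        · exact absurd (Subgroup.card_eq_one.mp h1) hint
        · have : A ⊓ B = A :=
            Subgroup.eq_of_le_of_card_ge inf_le_left (by rw [h1, hA])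
          exact inf_eq_left.mp this
      rcases key B hBbot hBtop with h | ⟨Q, rfl⟩
      · have h2 : A ≤ N ⊓ A := le_inf (hAB.trans h) le_rfl
        rw [hinf, le_bot_iff] at h2
        exact hAbot h2
      · have h3 : A = ↑Q := Subgroup.eq_of_le_of_card_ge hAB
          (by rw [hA]; exact hcard_le _ (hdisj _ Q.isPGroup'))
        exact hne (Subtype.ext h3)
    have hreach : ∀ b, (interGraph G).Reachable vA b → b = vA := by
      intro b hb
      obtain ⟨w⟩ := hb
      cases w with
      | nil => rfl
      | cons h _ => exact absurd h (hiso _)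
    have := hreach vN (hconn.preconnected vA vN)
    exact hANe (congrArg Subtype.val this).symm
end

section
/- Let G be a finite supersolvable group of order p₁^{α₁}⋯p_k^{α_k} with order length ℓ = α₁+⋯+α_k. Then the connectivity of Γ(G) is at least ℓ − 3 (with the conventions κ = −2, −1, 0 for groups of order 1, p, p² respectively). In particular every p-group of order greater than p^α is (α−2)-connected. -/
open Subgroup ArithmeticFunction
open scoped ArithmeticFunction.Omega

section Aux

variable {G : Type*} [Group G] [Finite G]

lemma aux_relindex_ne_zero (H K : Subgroup G) : H.relIndex K ≠ 0 :=
  Subgroup.index_ne_zero_of_finite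

lemma aux_index_ne_zero (H : Subgroup G) : H.index ≠ 0 :=
  Subgroup.index_ne_zero_of_finite

lemma aux_card_ne_zero (H : Subgroup G) : Nat.card H ≠ 0 :=
  Nat.card_pos.ne'

lemma aux_card_mul_relindex {H K : Subgroup G} (h : H ≤ K) :
    Nat.card H * H.relIndex K = Nat.card K := by
  have h2 := Subgroup.card_mul_index (H.subgroupOf K)
  rw [Nat.card_congr (Subgroup.subgroupOfEquivOfLe h).toEquiv] at h2
  exact h2

/-- Second isomorphism theorem for relindex. -/
lemma aux_relindex_sup {M N : Subgroup G} [N.Normal] :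
    M.relIndex (M ⊔ N) = (M ⊓ N).relIndex N := by
  have h1 := Subgroup.relIndex_mul_relIndex (M ⊓ N) M (M ⊔ N) inf_le_left le_sup_left
  have h2 := Subgroup.relIndex_mul_relIndex (M ⊓ N) N (M ⊔ N) inf_le_right le_sup_right
  have h3 : N.relIndex (M ⊔ N) = (M ⊓ N).relIndex M := by
    rw [Subgroup.relIndex_sup_right, ← Subgroup.inf_relIndex_right N M, inf_comm]
  rw [h3] at h2
  have hne : (M ⊓ N).relIndex M ≠ 0 := aux_relindex_ne_zero _ _
  apply Nat.eq_of_mul_eq_mul_left (Nat.pos_of_ne_zero hne)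
  rw [h1, mul_comm ((M ⊓ N).relIndex M)]
  exact h2.symm

/-- Step lemma: in a supersolvable finite group each proper subgroup has a
subgroup immediately above it of prime relative index. -/
lemma aux_step {n : ℕ} {s : Fin (n + 1) → Subgroup G}
    (h0 : s 0 = ⊥) (hlast : s (Fin.last n) = ⊤)
    (hnorm : ∀ i, (s i).Normal)
    (hstep : ∀ i : Fin n, s i.castSucc ≤ s i.succ ∧
      ((s i.castSucc).relIndex (s i.succ)).Prime)
    (M : Subgroup G) (hM : M ≠ ⊤) :
    ∃ M' : Subgroup G, M < M' ∧ (M.relIndex M').Prime := by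
  classical
  -- the set of indices i with ¬ s i ≤ M is nonempty
  have hne : (Finset.univ.filter fun i : Fin (n+1) => ¬ s i ≤ M).Nonempty := by
    refine ⟨Fin.last n, ?_⟩
    simp only [Finset.mem_filter, Finset.mem_univ, true_and, hlast]
    intro h
    exact hM (top_le_iff.mp h)
  set T := Finset.univ.filter fun i : Fin (n+1) => ¬ s i ≤ M with hT
  obtain ⟨hi0mem⟩ : True := trivial
  set i := T.min' hne with hidef
  have himem : i ∈ T := T.min'_mem hne
  have hiprop : ¬ s i ≤ M := by
    have := himem; rw [hT, Finset.mem_filter] at this; exact this.2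
  have hizero : i ≠ 0 := by
    intro h
    apply hiprop
    rw [h, h0]; exact bot_le
  -- j := i.pred
  set j : Fin n := i.pred hizero with hjdef
  have hjsucc : j.succ = i := Fin.succ_pred i hizero
  have hjlt : (j.castSucc : Fin (n+1)) < i := by
    rw [← hjsucc]; exact Fin.castSucc_lt_succ (i := j)
  have hjle : s j.castSucc ≤ M := by
    by_contra hcon
    have : j.castSucc ∈ T := by rw [hT, Finset.mem_filter]; exact ⟨Finset.mem_univ _, hcon⟩
    have := T.min'_le _ this
    exact absurd (lt_of_lt_of_le hjlt this) (lt_irrefl _)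
  set N := s j.succ with hN
  haveI : N.Normal := hnorm _
  have hsjN : ¬ N ≤ M := by rw [hN, hjsucc]; exact hiprop
  refine ⟨M ⊔ N, left_lt_sup.mpr hsjN, ?_⟩
  rw [aux_relindex_sup]
  -- (M ⊓ N).relIndex N divides the prime (s j.castSucc).relIndex N
  have hle1 : s j.castSucc ≤ M ⊓ N := le_inf hjle (hstep j).1
  have hmul := Subgroup.relIndex_mul_relIndex (s j.castSucc) (M ⊓ N) N hle1 inf_le_right
  have hdvd : (M ⊓ N).relIndex N ∣ (s j.castSucc).relIndex N := Dvd.intro_left _ hmul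
  have hprime : ((s j.castSucc).relIndex N).Prime := (hstep j).2
  rcases (Nat.Prime.eq_one_or_self_of_dvd hprime _ hdvd) with h1 | h1
  · exfalso
    rw [Subgroup.relIndex_eq_one] at h1
    exact hsjN (le_trans h1 inf_le_left)
  · rw [h1]; exact hprime

/-- Chain lemma: from any subgroup there is a strictly increasing chain of
length `Ω M.index` up to the whole group. -/
lemma aux_chain {n : ℕ} {s : Fin (n + 1) → Subgroup G}
    (h0 : s 0 = ⊥) (hlast : s (Fin.last n) = ⊤)
    (hnorm : ∀ i, (s i).Normal)
    (hstep : ∀ i : Fin n, s i.castSucc ≤ s i.succ ∧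
      ((s i.castSucc).relIndex (s i.succ)).Prime)
    (M : Subgroup G) :
    ∃ f : ℕ → Subgroup G, f 0 = M ∧ f (Ω M.index) = ⊤ ∧
      ∀ i < Ω M.index, f i < f (i + 1) := by
  have H : ∀ m : ℕ, ∀ M : Subgroup G, M.index = m →
      ∃ f : ℕ → Subgroup G, f 0 = M ∧ f (Ω M.index) = ⊤ ∧
        ∀ i < Ω M.index, f i < f (i + 1) := by
    intro m
    induction m using Nat.strong_induction_on with
    | _ m ih =>
      intro M hMm
      by_cases hM : M = ⊤
      · subst hM
        refine ⟨fun _ => ⊤, rfl, rfl, ?_⟩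
        intro i hi
        rw [Subgroup.index_top] at hi
        simp [ArithmeticFunction.cardFactors_one] at hi
      · obtain ⟨M', hlt, hp⟩ := aux_step h0 hlast hnorm hstep M hM
        have hrel := Subgroup.relIndex_mul_index hlt.le
        have hM'lt : M'.index < M.index := by
          rw [← hrel]
          have h2 := hp.two_le
          have := aux_index_ne_zero M'
          nlinarith [Nat.pos_of_ne_zero this]
        have hOm : Ω M.index = Ω M'.index + 1 := by
          rw [← hrel, ArithmeticFunction.cardFactors_mul hp.ne_zero (aux_index_ne_zero M'),
            ArithmeticFunction.cardFactors_apply_prime hp]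
          ring
        obtain ⟨f, hf0, hfl, hfs⟩ := ih M'.index (hMm ▸ hM'lt) M' rfl
        refine ⟨fun i => match i with | 0 => M | (j+1) => f j, rfl, ?_, ?_⟩
        · rw [hOm]; exact hfl
        · intro i hi
          match i with
          | 0 => simpa [hf0] using hlt
          | (j+1) =>
            have : j < Ω M'.index := by omega
            exact hfs j this
  exact H M.index M rfl

/-- Strict monotonicity of the chain. -/
lemma aux_chain_mono {α : Type*} [Preorder α] {f : ℕ → α} {d : ℕ}
    (hf : ∀ i < d, f i < f (i + 1)) :
    ∀ i j, i < j → j ≤ d → f i < f j := by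
  intro i j hij hjd
  induction j with
  | zero => omega
  | succ j ihj =>
    rcases Nat.lt_or_ge i j with h | h
    · exact lt_trans (ihj h (by omega)) (hf j (by omega))
    · have : i = j := by omega
      subst this
      exact hf i (by omega)

lemma aux_omega_card_add (M : Subgroup G) :
    Ω (Nat.card M) + Ω M.index = Ω (Nat.card G) := by
  rw [← Subgroup.card_mul_index M,
    ArithmeticFunction.cardFactors_mul (aux_card_ne_zero M) (aux_index_ne_zero M)]

/-- Counting lemma: given a subgroup `M ≠ ⊥`, and a small vertex set `S`, there
is a proper nontrivial subgroup containing `M` avoiding `S`. -/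
lemma aux_avoid {n : ℕ} {s : Fin (n + 1) → Subgroup G}
    (h0 : s 0 = ⊥) (hlast : s (Fin.last n) = ⊤)
    (hnorm : ∀ i, (s i).Normal)
    (hstep : ∀ i : Fin n, s i.castSucc ≤ s i.succ ∧
      ((s i.castSucc).relIndex (s i.succ)).Prime)
    (M : Subgroup G) (hMbot : M ≠ ⊥)
    (S : Set {H : Subgroup G // H ≠ ⊥ ∧ H ≠ ⊤})
    (hS : Nat.card S + Ω (Nat.card M) < Ω (Nat.card G)) :
    ∃ v : {H : Subgroup G // H ≠ ⊥ ∧ H ≠ ⊤}, v ∉ S ∧ M ≤ v.1 := by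
  classical
  obtain ⟨f, hf0, hfl, hfs⟩ := aux_chain h0 hlast hnorm hstep M
  set d := Ω M.index with hd
  have hmono := aux_chain_mono hfs
  have hdS : Nat.card S < d := by
    have := aux_omega_card_add M
    omega
  -- each f i for i < d is a proper nontrivial subgroup containing M
  have hprop : ∀ i, i < d → M ≤ f i ∧ f i ≠ ⊥ ∧ f i ≠ ⊤ := by
    intro i hi
    have hle : M ≤ f i := by
      rcases Nat.eq_zero_or_pos i with h | h
      · subst h; rw [hf0]
      · exact le_of_lt (hf0 ▸ hmono 0 i h (by omega))
    have hlt : f i < ⊤ := by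
      rw [← hfl]
      exact hmono i d hi le_rfl
    exact ⟨hle, fun hb => hMbot (le_bot_iff.mp (hb ▸ hle)), hlt.ne⟩
  set g : Fin d → {H : Subgroup G // H ≠ ⊥ ∧ H ≠ ⊤} :=
    fun i => ⟨f i, (hprop i i.2).2⟩ with hg
  have hginj : Function.Injective g := by
    intro a b hab
    by_contra hne
    rcases Ne.lt_or_gt hne with h | h
    · have := hmono a b h (le_of_lt b.2)
      rw [show (f a : Subgroup G) = (g a).1 from rfl, show (f b : Subgroup G) = (g b).1 from rfl,
        hab] at this
      exact absurd this (lt_irrefl _)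
    · have := hmono b a h (le_of_lt a.2)
      rw [show (f a : Subgroup G) = (g a).1 from rfl, show (f b : Subgroup G) = (g b).1 from rfl,
        hab] at this
      exact absurd this (lt_irrefl _)
  by_contra hcon
  push_neg at hcon
  have hall : ∀ i : Fin d, g i ∈ S := by
    intro i
    by_contra hni
    exact absurd ((hprop i i.2).1) (hcon (g i) hni)
  set g' : Fin d → S := fun i => ⟨g i, hall i⟩ with hg'
  have hg'inj : Function.Injective g' := by
    intro a b hab
    apply hginj
    exact Subtype.ext_iff.mp hab
  have := Nat.card_le_card_of_injective g' hg'inj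
  rw [Nat.card_eq_fintype_card, Fintype.card_fin] at this
  omega

end Aux

section Main

variable {G : Type*} [Group G] [Finite G]

lemma aux_reach {S : Set {H : Subgroup G // H ≠ ⊥ ∧ H ≠ ⊤}}
    (u v : ↥(Sᶜ)) (h : (u.1.1 : Subgroup G) ⊓ v.1.1 ≠ ⊥) :
    ((interGraph G).induce Sᶜ).Reachable u v := by
  by_cases he : u = v
  · subst he; exact SimpleGraph.Reachable.refl u
  · refine SimpleGraph.Adj.reachable ?_
    show (interGraph G).Adj u.1 v.1
    exact ⟨fun hh => he (Subtype.ext hh), h⟩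

lemma aux_find_m {n : ℕ} {s : Fin (n + 1) → Subgroup G}
    (h0 : s 0 = ⊥) (hlast : s (Fin.last n) = ⊤)
    (hnorm : ∀ i, (s i).Normal)
    (hstep : ∀ i : Fin n, s i.castSucc ≤ s i.succ ∧
      ((s i.castSucc).relIndex (s i.succ)).Prime)
    {H1 : Subgroup G} (hH1norm : H1.Normal) (hH1p : (Nat.card H1).Prime)
    (S : Set {H : Subgroup G // H ≠ ⊥ ∧ H ≠ ⊤})
    (hS : Nat.card S + 4 ≤ Ω (Nat.card G))
    (a : ↥(Sᶜ)) :
    ∃ m : ↥(Sᶜ), H1 ≤ (m.1.1 : Subgroup G) ∧ (a.1.1 : Subgroup G) ⊓ m.1.1 ≠ ⊥ := by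
  classical
  set K : Subgroup G := a.1.1 with hK
  have hKbot : K ≠ ⊥ := a.1.2.1
  -- find an element of prime order in K
  have hcardK : Nat.card K ≠ 1 := fun h => hKbot (Subgroup.card_eq_one.mp h)
  obtain ⟨q, hq, hqdvd⟩ := Nat.exists_prime_and_dvd hcardK
  haveI : Fact q.Prime := ⟨hq⟩
  obtain ⟨x, hx⟩ := exists_prime_orderOf_dvd_card' (G := K) q hqdvd
  set A : Subgroup G := Subgroup.zpowers (x : G) with hA
  have hAcard : Nat.card A = q := by
    rw [hA, Nat.card_zpowers, orderOf_coe, hx]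
  have hAK : A ≤ K := Subgroup.zpowers_le.mpr x.2
  have hAbot : A ≠ ⊥ := fun h => hq.ne_one (by rw [← hAcard, h, Subgroup.card_bot])
  -- M := A ⊔ H1
  set M : Subgroup G := A ⊔ H1 with hM
  have hH1M : H1 ≤ M := le_sup_right
  have hAM : A ≤ M := le_sup_left
  have hMbot : M ≠ ⊥ := fun h => hAbot (le_bot_iff.mp (h ▸ hAM))
  have hcardM : Nat.card H1 * H1.relIndex M = Nat.card M := aux_card_mul_relindex hH1M
  have hrelM : H1.relIndex M = H1.relIndex A := by
    rw [hM, Subgroup.relIndex_sup_right]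
  have hreldvd : H1.relIndex A ∣ q := by
    rw [← hAcard]
    exact Subgroup.index_dvd_card (G := A) (H1.subgroupOf A)
  have hΩrel : Ω (H1.relIndex M) ≤ 1 := by
    rw [hrelM]
    rcases (Nat.Prime.eq_one_or_self_of_dvd hq _ hreldvd) with h | h
    · rw [h]; simp
    · rw [h, ArithmeticFunction.cardFactors_apply_prime hq]
  have hΩM : Ω (Nat.card M) ≤ 2 := by
    rw [← hcardM, ArithmeticFunction.cardFactors_mul (aux_card_ne_zero H1)
      (aux_relindex_ne_zero H1 M), ArithmeticFunction.cardFactors_apply_prime hH1p]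
    omega
  obtain ⟨v, hvS, hMv⟩ := aux_avoid h0 hlast hnorm hstep M hMbot S (by omega)
  refine ⟨⟨v, hvS⟩, le_trans hH1M hMv, ?_⟩
  intro hcontra
  apply hAbot
  rw [← le_bot_iff, ← hcontra]
  exact le_inf hAK (le_trans hAM hMv)

lemma aux_main (hss : IsSupersolvable G)
    (k : ℕ) (hk : k + 3 ≤ Ω (Nat.card G)) : KConnected (interGraph G) k := by
  classical
  haveI : Finite (Subgroup G) :=
    Finite.of_injective (fun H => (H : Set G)) SetLike.coe_injective
  obtain ⟨n, s, h0, hlast, hnorm, hstep⟩ := hss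
  have hΩ3 : 3 ≤ Ω (Nat.card G) := by omega
  constructor
  · -- more than k vertices
    obtain ⟨f, hf0, hfl, hfs⟩ := aux_chain h0 hlast hnorm hstep (⊥ : Subgroup G)
    rw [Subgroup.index_bot] at hfl hfs
    set L := Ω (Nat.card G) with hL
    have hmono := aux_chain_mono hfs
    set φ : Fin (L - 1) → {H : Subgroup G // H ≠ ⊥ ∧ H ≠ ⊤} := fun i =>
      ⟨f (i + 1), by
        constructor
        · intro hb
          have := hmono 0 (i + 1) (by omega) (by omega)
          rw [hf0, hb] at this
          exact absurd this (lt_irrefl _)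
        · intro ht
          have := hmono (i + 1) L (by omega) le_rfl
          rw [hfl, ht] at this
          exact absurd this (lt_irrefl _)⟩ with hφ
    have hφinj : Function.Injective φ := by
      intro i j hij
      by_contra hne
      have hne' : (i : ℕ) ≠ (j : ℕ) := fun h => hne (Fin.ext h)
      have hval : f (i + 1) = f (j + 1) := congrArg (fun z => z.1) hij
      rcases Nat.lt_or_ge (i : ℕ) (j : ℕ) with h | h
      · have := hmono (i + 1) (j + 1) (by omega) (by omega)
        rw [hval] at this
        exact absurd this (lt_irrefl _)
      · have := hmono (j + 1) (i + 1) (by omega) (by omega)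
        rw [hval] at this
        exact absurd this (lt_irrefl _)
    have := Nat.card_le_card_of_injective φ hφinj
    rw [Nat.card_eq_fintype_card, Fintype.card_fin] at this
    omega
  · -- every separating set has at least k vertices
    intro S hsep
    by_contra hlt
    push_neg at hlt
    have hScard : Nat.card S + 4 ≤ Ω (Nat.card G) := by omega
    -- get the normal subgroup of prime order H1
    have hn : n ≠ 0 := by
      intro h
      subst h
      have hbt : (⊥ : Subgroup G) = ⊤ := by
        rw [← h0, ← hlast]
        rfl
      have hcard1 : Nat.card G = 1 := by
        rw [← Subgroup.card_top, ← hbt, Subgroup.card_bot]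
      rw [hcard1] at hΩ3
      simp [ArithmeticFunction.cardFactors_one] at hΩ3
    set i0 : Fin n := ⟨0, Nat.pos_of_ne_zero hn⟩ with hi0
    have hcast : i0.castSucc = (0 : Fin (n + 1)) := by
      ext; simp [hi0]
    set H1 : Subgroup G := s i0.succ with hH1
    haveI hH1norm : H1.Normal := hnorm _
    have hH1p : (Nat.card H1).Prime := by
      have := (hstep i0).2
      rwa [hcast, h0, Subgroup.relIndex_bot_left] at this
    obtain ⟨a, b, hnr⟩ := hsep
    apply hnr
    obtain ⟨ma, hma1, hma2⟩ :=
      aux_find_m h0 hlast hnorm hstep hH1norm hH1p S hScard a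
    obtain ⟨mb, hmb1, hmb2⟩ :=
      aux_find_m h0 hlast hnorm hstep hH1norm hH1p S hScard b
    have r1 : ((interGraph G).induce Sᶜ).Reachable a ma := aux_reach a ma hma2
    have r2 : ((interGraph G).induce Sᶜ).Reachable ma mb := by
      apply aux_reach
      intro hcontra
      apply hH1p.ne_one
      have : H1 ≤ ⊥ := hcontra ▸ le_inf hma1 hmb1
      rw [le_bot_iff.mp this, Subgroup.card_bot]
    have r3 : ((interGraph G).induce Sᶜ).Reachable mb b := (aux_reach b mb hmb2).symm
    exact (r1.trans r2).trans r3

end Main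

theorem stmt17 (G : Type*) [Group G] [Finite G] (hss : IsSupersolvable G) :
    (∀ k : ℕ, k + 3 ≤ (Nat.card G).primeFactorsList.length →
      KConnected (interGraph G) k) ∧
    (∀ p α : ℕ, p.Prime → IsPGroup p G → 2 ≤ α → p ^ α < Nat.card G →
      KConnected (interGraph G) (α - 2)) := by
  have hmain : ∀ k : ℕ, k + 3 ≤ (Nat.card G).primeFactorsList.length →
      KConnected (interGraph G) k := by
    intro k hk
    rw [← ArithmeticFunction.cardFactors_apply] at hk
    exact aux_main hss k hk
  refine ⟨hmain, ?_⟩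
  intro p α hp hpg hα hcard
  haveI : Fact p.Prime := ⟨hp⟩
  obtain ⟨β, hβ⟩ := (IsPGroup.iff_card).mp hpg
  have hαβ : α < β := by
    rw [hβ] at hcard
    exact (Nat.pow_lt_pow_iff_right hp.one_lt).mp hcard
  apply hmain
  rw [← ArithmeticFunction.cardFactors_apply, hβ,
    ArithmeticFunction.cardFactors_apply_prime_pow hp]
  omega
end

section
/- Let G be a finite group and N a normal subgroup of G admitting a chain 1 < N₁ < N₂ < … < N_x = N with each N_i normal in G. If the intersection graph of G/N is k-connected, then the intersection graph of G is (k+x−1)-connected. In particular κ(G/N) ≤ κ(G). -/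
open scoped Pointwise


lemma my_dedekind {G : Type*} [Group G] (A B C : Subgroup G) [B.Normal] (hBC : B ≤ C) :
    (A ⊔ B) ⊓ C = (A ⊓ C) ⊔ B := by
  apply le_antisymm
  · rintro g ⟨hg1, hg2⟩
    have hg1' : g ∈ ((A : Set G) * (B : Set G)) := by rw [← Subgroup.mul_normal]; exact hg1
    obtain ⟨a, ha, b, hb, rfl⟩ := hg1'
    have haC : a ∈ C := by
      have : (a * b) * b⁻¹ ∈ C := C.mul_mem hg2 (C.inv_mem (hBC hb))
      simpa using this
    exact Subgroup.mul_mem _ (Subgroup.mem_sup_left ⟨ha, haC⟩) (Subgroup.mem_sup_right hb)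
  · exact sup_le (le_inf (inf_le_left.trans le_sup_left) inf_le_right)
      (le_inf le_sup_right hBC)

lemma my_exists_atom {G : Type*} [Group G] [Finite G] (K : Subgroup G) (hK : K ≠ ⊥) :
    ∃ L : Subgroup G, L ≤ K ∧ L ≠ ⊥ ∧ ∀ K' : Subgroup G, K' ≤ L → K' = ⊥ ∨ K' = L := by
  have : IsAtomic (Subgroup G) :=
    isAtomic_of_orderBot_wellFounded_lt (Finite.to_wellFoundedLT).wf
  obtain ⟨L, hL, hLK⟩ := (eq_bot_or_exists_atom_le K).resolve_left hK
  exact ⟨L, hLK, hL.1, fun K' hK' => (hK'.lt_or_eq).imp (hL.2 K') id⟩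

lemma my_kconn_mono {V : Type*} (Γ : SimpleGraph V) {k k' : ℕ} (hkk : k ≤ k')
    (h : KConnected Γ k') : KConnected Γ k :=
  ⟨lt_of_le_of_lt hkk h.1, fun S hS => le_trans hkk (h.2 S hS)⟩

lemma my_min_degree {V : Type*} [Finite V] (Γ : SimpleGraph V) (k : ℕ)
    (h : KConnected Γ k) (v : V) : k ≤ Nat.card {w // Γ.Adj v w} := by
  classical
  by_cases hall : ∀ u, u ≠ v → Γ.Adj v u
  · have he : {w | Γ.Adj v w} = {w | ¬ w = v} := by
      ext w
      exact ⟨fun hw => (Γ.ne_of_adj hw).symm, fun hw => hall w hw⟩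
    have hf : Fintype V := Fintype.ofFinite V
    have h1 : Nat.card {w // ¬ w = v} = Nat.card V - 1 := by
      rw [Nat.card_eq_fintype_card, Nat.card_eq_fintype_card]
      rw [Fintype.card_subtype_compl]
      simp [Fintype.card_subtype_eq]
    calc k ≤ Nat.card V - 1 := by have := h.1; omega
    _ = Nat.card {w // ¬ w = v} := h1.symm
    _ = Nat.card {w // Γ.Adj v w} := by
        rw [Nat.card_eq_fintype_card, Nat.card_eq_fintype_card]
        apply Fintype.card_congr
        exact Equiv.subtypeEquivRight (fun w => by
          constructor
          · exact fun hw => hall w hw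
          · exact fun hw => (Γ.ne_of_adj hw).symm)
  · push_neg at hall
    obtain ⟨u, huv, hnadj⟩ := hall
    have hsep : IsSepSet Γ {w | Γ.Adj v w} := by
      refine ⟨⟨v, fun hv => Γ.loopless.irrefl v hv⟩, ⟨u, fun hu => hnadj hu⟩, fun hr => ?_⟩
      obtain ⟨p⟩ := hr
      cases p with
      | nil => exact huv rfl
      | @cons _ w _ h' p' => exact w.2 h'
    exact h.2 _ hsep

theorem stmt18 (G : Type*) [Group G] [Finite G] (N : Subgroup G) [N.Normal]
    (x : ℕ) (hx : 1 ≤ x) (s : Fin x → Subgroup G) (hmono : StrictMono s)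
    (hbot : ⊥ < s ⟨0, by omega⟩) (hlast : s ⟨x - 1, by omega⟩ = N)
    (hnorm : ∀ i, (s i).Normal) (k : ℕ)
    (hquot : KConnected (interGraph (G ⧸ N)) k) :
    KConnected (interGraph G) (k + x - 1) ∧
    ∀ m : ℕ, KConnected (interGraph (G ⧸ N)) m → KConnected (interGraph G) m := by
  classical
  suffices main : ∀ m : ℕ, KConnected (interGraph (G ⧸ N)) m →
      KConnected (interGraph G) (m + x - 1) by
    exact ⟨main k hquot, fun m hm => my_kconn_mono _ (by omega) (main m hm)⟩
  clear hquot k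
  intro m hquot
  -- notation
  set VG := {H : Subgroup G // H ≠ ⊥ ∧ H ≠ ⊤} with hVG
  set VQ := {H : Subgroup (G ⧸ N) // H ≠ ⊥ ∧ H ≠ ⊤} with hVQ
  have hfVG : Fintype VG := Fintype.ofFinite _
  have hfVQ : Fintype VQ := Fintype.ofFinite _
  set π : G →* G ⧸ N := QuotientGroup.mk' N with hπdef
  have hπ : Function.Surjective π := QuotientGroup.mk'_surjective N
  have hker : π.ker = N := QuotientGroup.ker_mk' N
  -- chain facts
  set y := x - 1 with hy
  have hxy : x = y + 1 := by omega
  set σ : ℕ → Subgroup G :=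
    fun i => s ⟨min i (x-1), Nat.lt_of_le_of_lt (min_le_right _ _) (by omega)⟩ with hσdef
  have hσeq : ∀ (i : ℕ) (hi : i < x), σ i = s ⟨i, hi⟩ := by
    intro i hi
    apply congrArg s
    apply Fin.ext
    show min i (x-1) = i
    omega
  have hσleN : ∀ i, σ i ≤ N := by
    intro i
    rw [← hlast]
    exact hmono.monotone (by simp [Fin.mk_le_mk])
  have hσbot : ∀ i, σ i ≠ ⊥ := by
    intro i
    refine (lt_of_lt_of_le hbot (hmono.monotone ?_)).ne'
    simp [Fin.mk_le_mk]
  have hσltN : ∀ i, i < y → σ i < N := by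
    intro i hi
    rw [← hlast, hσeq i (by omega)]
    exact hmono (by simp only [Fin.mk_lt_mk]; omega)
  have hσmono : ∀ i j, i < j → j < x → σ i < σ j := by
    intro i j hij hj
    rw [hσeq i (by omega), hσeq j (by omega)]
    exact hmono (by simp only [Fin.mk_lt_mk]; omega)
  have hσnormal : ∀ i, (σ i).Normal := fun i => hnorm _
  have hNbot : N ≠ ⊥ := fun hN => hσbot 0 (le_bot_iff.mp (hN ▸ hσleN 0))
  have hNEQ : Nonempty VQ := by
    by_contra h
    rw [not_nonempty_iff] at h
    have := hquot.1
    rw [Nat.card_of_isEmpty] at this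
    omega
  have hNtop : N ≠ ⊤ := by
    intro hN
    obtain ⟨K⟩ := hNEQ
    apply K.2.1
    have hsub : Subsingleton (G ⧸ N) := by
      rw [hN]
      exact QuotientGroup.subsingleton_quotient_top
    ext g
    simp only [Subgroup.mem_bot]
    exact ⟨fun _ => Subsingleton.elim g 1, fun h => h ▸ K.1.one_mem⟩
  -- vertex constructors
  have hσtop : ∀ i, σ i ≠ ⊤ := fun i h => hNtop (top_le_iff.mp (h ▸ hσleN i))
  set chainV : ℕ → VG := fun i => ⟨σ i, hσbot i, hσtop i⟩ with hchainV
  set NV : VG := ⟨N, hNbot, hNtop⟩ with hNV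
  have hcomap_bot : Subgroup.comap π (⊥ : Subgroup (G ⧸ N)) = N := by
    rw [MonoidHom.comap_bot, hker]
  have hcomapN : ∀ K : Subgroup (G ⧸ N), N ≤ Subgroup.comap π K := by
    intro K
    exact hcomap_bot.ge.trans (Subgroup.comap_mono bot_le)
  have hψbot : ∀ K : VQ, Subgroup.comap π K.1 ≠ ⊥ := by
    intro K h
    apply hNbot
    rw [← le_bot_iff, ← h]
    exact hcomapN K.1
  have hψtop : ∀ K : VQ, Subgroup.comap π K.1 ≠ ⊤ := by
    intro K h
    exact K.2.2 (Subgroup.comap_injective hπ (by rw [h, Subgroup.comap_top]))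
  set ψ : VQ → VG := fun K => ⟨Subgroup.comap π K.1, hψbot K, hψtop K⟩ with hψdef
  have hψinj : Function.Injective ψ := by
    intro K K' h
    exact Subtype.ext (Subgroup.comap_injective hπ (congrArg Subtype.val h))
  have hψneN : ∀ K : VQ, (ψ K).1 ≠ N := by
    intro K h
    apply K.2.1
    apply Subgroup.comap_injective hπ
    rw [hcomap_bot]
    exact h
  have hψN : ∀ K : VQ, N ≤ (ψ K).1 := fun K => hcomapN K.1
  -- the big finset of subgroups containing N
  set FC : Finset VG := Finset.image ψ Finset.univ with hFC
  have hFCcard : m + 1 ≤ FC.card := by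
    rw [hFC, Finset.card_image_of_injective _ hψinj, Finset.card_univ,
      ← Nat.card_eq_fintype_card]
    exact hquot.1
  have hFCN : ∀ v ∈ FC, N ≤ v.1 := by
    intro v hv
    rw [hFC, Finset.mem_image] at hv
    obtain ⟨K, -, rfl⟩ := hv
    exact hψN K
  have hFCneN : ∀ v ∈ FC, v.1 ≠ N := by
    intro v hv
    rw [hFC, Finset.mem_image] at hv
    obtain ⟨K, -, rfl⟩ := hv
    exact hψneN K
  -- part 1 : many vertices
  have hchainVinj : ∀ i ∈ Finset.range y, ∀ j ∈ Finset.range y, chainV i = chainV j → i = j := by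
    intro i hi j hj h
    rw [Finset.mem_range] at hi hj
    by_contra hne
    rcases Nat.lt_or_ge i j with h' | h'
    · exact (hσmono i j h' (by omega)).ne (congrArg Subtype.val h)
    · exact (hσmono j i (by omega) (by omega)).ne (congrArg Subtype.val h).symm
  have hpart1 : m + x - 1 < Nat.card VG := by
    have hsub : FC ∪ insert NV ((Finset.range y).image chainV) ⊆ Finset.univ :=
      Finset.subset_univ _
    have hdisj : Disjoint FC (insert NV ((Finset.range y).image chainV)) := by
      rw [Finset.disjoint_left]
      intro v hv hv'
      rcases Finset.mem_insert.mp hv' with h | h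
      · exact hFCneN v hv (by rw [h])
      · rw [Finset.mem_image] at h
        obtain ⟨i, hi, rfl⟩ := h
        rw [Finset.mem_range] at hi
        exact absurd (le_antisymm (hσleN i) (hFCN _ hv)) (hσltN i hi).ne
    have hNVnotmem : NV ∉ (Finset.range y).image chainV := by
      rw [Finset.mem_image]
      rintro ⟨i, hi, h⟩
      rw [Finset.mem_range] at hi
      exact (hσltN i hi).ne (congrArg Subtype.val h)
    have hcard : (FC ∪ insert NV ((Finset.range y).image chainV)).card
        = FC.card + (1 + y) := by
      rw [Finset.card_union_of_disjoint hdisj, Finset.card_insert_of_notMem hNVnotmem,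
        Finset.card_image_of_injOn hchainVinj, Finset.card_range]
      omega
    have := Finset.card_le_card hsub
    rw [hcard, Finset.card_univ, ← Nat.card_eq_fintype_card] at this
    omega
  refine ⟨hpart1, ?_⟩
  intro S hsep
  obtain ⟨a, b, hab⟩ := hsep
  -- it suffices to exhibit a big finset inside S
  suffices hFF : ∃ F : Finset VG, (↑F : Set VG) ⊆ S ∧ m + x - 1 ≤ F.card by
    obtain ⟨F, hFS, hFcard⟩ := hFF
    calc m + x - 1 ≤ F.card := hFcard
    _ = (↑F : Set VG).ncard := (Set.ncard_coe_finset F).symm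
    _ ≤ S.ncard := Set.ncard_le_ncard hFS (Set.toFinite S)
    _ = Nat.card S := (Nat.card_coe_set_eq S).symm
  -- the set of "central" vertices : a clique
  set Dset : Set VG := {v | N ≤ v.1 ∨ ∃ i : Fin x, v.1 = s i} with hDset
  have hchainD : ∀ i, i < x → chainV i ∈ Dset := by
    intro i hi
    exact Or.inr ⟨⟨i, hi⟩, hσeq i hi⟩
  have hσ0le : ∀ i, σ 0 ≤ σ i := by
    intro i
    apply hmono.monotone
    rw [Fin.mk_le_mk]
    omega
  have hσ0s : ∀ i : Fin x, σ 0 ≤ s i := by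
    intro i
    rw [← hσeq i.1 i.2]
    exact hσ0le i.1
  have hσ0D : ∀ v : VG, v ∈ Dset → σ 0 ≤ v.1 := by
    rintro v (hv | ⟨i, hvi⟩)
    · exact (hσleN 0).trans hv
    · rw [hvi]
      exact hσ0s i
  have hclique : ∀ v w : VG, v ∈ Dset → w ∈ Dset → v ≠ w → (interGraph G).Adj v w := by
    intro v w hv hw hne
    exact ⟨hne, fun h => hσbot 0 (le_bot_iff.mp (h ▸ le_inf (hσ0D v hv) (hσ0D w hw)))⟩
  by_cases hD : ∀ v ∈ Dset, v ∈ S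
  -- Case 1 : the whole clique is inside S
  · refine ⟨FC ∪ insert NV ((Finset.range y).image chainV), ?_, ?_⟩
    · intro v hv
      rw [Finset.coe_union, Set.mem_union] at hv
      apply hD
      rcases hv with hv | hv
      · exact Or.inl (hFCN v (by exact_mod_cast hv))
      · rw [Finset.coe_insert, Set.mem_insert_iff] at hv
        rcases hv with rfl | hv
        · exact Or.inl le_rfl
        · rw [Finset.mem_coe, Finset.mem_image] at hv
          obtain ⟨i, hi, rfl⟩ := hv
          rw [Finset.mem_range] at hi
          exact hchainD i (by omega)
    · have hdisj : Disjoint FC (insert NV ((Finset.range y).image chainV)) := by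
        rw [Finset.disjoint_left]
        intro v hv hv'
        rcases Finset.mem_insert.mp hv' with h | h
        · exact hFCneN v hv (by rw [h])
        · rw [Finset.mem_image] at h
          obtain ⟨i, hi, rfl⟩ := h
          rw [Finset.mem_range] at hi
          exact absurd (le_antisymm (hσleN i) (hFCN _ hv)) (hσltN i hi).ne
      have hNVnotmem : NV ∉ (Finset.range y).image chainV := by
        rw [Finset.mem_image]
        rintro ⟨i, hi, h⟩
        rw [Finset.mem_range] at hi
        exact (hσltN i hi).ne (congrArg Subtype.val h)
      rw [Finset.card_union_of_disjoint hdisj, Finset.card_insert_of_notMem hNVnotmem,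
        Finset.card_image_of_injOn hchainVinj, Finset.card_range]
      omega
  -- Case 2 : some clique vertex survives ; look at the component of c
  · push_neg at hD
    obtain ⟨d, hdD, hdS⟩ := hD
    set Γ' := (interGraph G).induce Sᶜ with hΓ'
    have hdc : (d : VG) ∈ Sᶜ := hdS
    have hcex : ∃ c : ↥(Sᶜ), ¬ Γ'.Reachable c ⟨d, hdc⟩ := by
      by_contra h
      push_neg at h
      exact hab ((h a).trans (h b).symm)
    obtain ⟨⟨cv, hcvS⟩, hc⟩ := hcex
    set Pset : Set VG := {v | ∃ hv : v ∈ Sᶜ, Γ'.Reachable ⟨cv, hcvS⟩ ⟨v, hv⟩} with hPset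
    have hcP : cv ∈ Pset := ⟨hcvS, SimpleGraph.Reachable.refl _⟩
    have hPnS : ∀ v ∈ Pset, v ∉ S := fun v hv => hv.1
    have hPadj : ∀ v w : VG, v ∈ Pset → (interGraph G).Adj v w → w ∉ S → w ∈ Pset := by
      intro v w hv hadj hw
      have hw' : w ∈ Sᶜ := hw
      refine ⟨hw', hv.2.trans ?_⟩
      apply SimpleGraph.Adj.reachable
      exact hadj
    have hPD : ∀ v : VG, v ∈ Pset → v ∉ Dset := by
      intro v hv hvD
      apply hc
      rcases eq_or_ne v d with rfl | hne
      · exact hv.2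
      · exact hv.2.trans (SimpleGraph.Adj.reachable (hclique v d hvD hdD hne))
    have hPS2 : ∀ v w : VG, v ∈ Pset → (interGraph G).Adj v w → w ∉ Pset → w ∈ S := by
      intro v w hv hadj hw
      by_contra hwS
      exact hw (hPadj v w hv hadj hwS)
    by_cases hA : ∃ v : VG, v ∈ Pset ∧ v.1 ⊓ N ≠ ⊥
    -- CASE A
    · obtain ⟨H, hHP, hHN⟩ := hA
      obtain ⟨L, hLle, hLbot, hLsimp⟩ := my_exists_atom (H.1 ⊓ N) hHN
      have hLN : L ≤ N := hLle.trans inf_le_right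
      have hLH : L ≤ H.1 := hLle.trans inf_le_left
      set T : ℕ → Subgroup G := fun i => L ⊔ σ i with hT
      have hTleN : ∀ i, T i ≤ N := fun i => sup_le hLN (hσleN i)
      have hTbot : ∀ i, T i ≠ ⊥ := by
        intro i h
        exact hLbot (le_bot_iff.mp (h ▸ le_sup_left))
      have hTtop : ∀ i, T i ≠ ⊤ := fun i h => hNtop (top_le_iff.mp (h ▸ hTleN i))
      set TV : ℕ → VG := fun i => ⟨T i, hTbot i, hTtop i⟩ with hTVdef
      have hCinS : ∀ K : VG, N ≤ K.1 → K ∈ S := by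
        intro K hK
        have hKP : K ∉ Pset := fun h => hPD K h (Or.inl hK)
        have hne : H ≠ K := fun h => hKP (h ▸ hHP)
        exact hPS2 H K hHP ⟨hne, fun h => hHN (le_bot_iff.mp
          (le_trans (le_inf inf_le_left (inf_le_right.trans hK)) h.le))⟩ hKP
      have hchainP : ∀ i, i < x → chainV i ∉ Pset := fun i hi h => hPD _ h (hchainD i hi)
      have hL1 : ∀ i, i < y → chainV i ∉ S → TV i ∈ S := by
        intro i hi hiS
        by_contra hTS
        have hTP : TV i ∈ Pset := by
          rcases eq_or_ne (TV i) H with heq | hne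
          · exact heq ▸ hHP
          · exact hPadj H (TV i) hHP
              ⟨hne.symm, fun h => hLbot (le_bot_iff.mp (h ▸ le_inf hLH le_sup_left))⟩ hTS
        apply hiS
        refine hPS2 (TV i) (chainV i) hTP
          ⟨fun h => hPD _ hTP (h ▸ hchainD i (by omega)), fun h => hσbot i
            (le_bot_iff.mp (h ▸ le_inf le_sup_right le_rfl))⟩
          (hchainP i (by omega))
      have hL2 : ∀ i, i < y → L ≤ σ i → chainV i ∈ S := by
        intro i hi hLσ
        by_contra hiS
        have hTS := hL1 i hi hiS
        rw [show TV i = chainV i from Subtype.ext (sup_eq_right.mpr hLσ)] at hTS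
        exact hiS hTS
      have hL3 : ∀ i i', i < i' → i' < x → σ i' ≤ T i → L ≤ σ i' := by
        intro i i' hii hi'x hle
        rcases hLsimp (L ⊓ σ i') inf_le_left with h | h
        · exfalso
          haveI := hσnormal i
          have hded := my_dedekind L (σ i) (σ i') (le_of_lt (hσmono i i' hii hi'x))
          rw [h, bot_sup_eq, inf_eq_right.mpr hle] at hded
          exact (hσmono i i' hii hi'x).ne' hded
        · exact inf_eq_left.mp h
      set Bad : ℕ → Prop := fun i => chainV i ∉ S ∧ ∃ j : Fin x, T i = s j with hBadDef
      have claim1 : ∀ i i', i < i' → i' < y → Bad i → Bad i' → False := by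
        rintro i i' hii hi'y ⟨hiS, j, hj⟩ ⟨hi'S, -⟩
        have hLsj : L ≤ s j := by rw [← hj]; exact le_sup_left
        have hσi' : L ≤ σ i' := by
          rcases le_or_gt j.1 i' with hji' | hji'
          · refine hLsj.trans ?_
            rw [hσeq i' (by omega)]
            exact hmono.monotone (by simp only [Fin.le_def]; omega)
          · refine hL3 i i' hii (by omega) ?_
            rw [hj, hσeq i' (by omega)]
            exact hmono.monotone (by simp only [Fin.le_def]; omega)
        exact hi'S (hL2 i' hi'y hσi')
      set GoodF : Finset ℕ := (Finset.range y).filter (fun i => ¬ Bad i) with hGoodF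
      have hGoodcard : y - 1 ≤ GoodF.card := by
        have hsplit := Finset.card_filter_add_card_filter_not
          (s := Finset.range y) (p := Bad)
        have hbadcard : ((Finset.range y).filter Bad).card ≤ 1 := by
          rw [Finset.card_le_one]
          intro i hi i' hi'
          rw [Finset.mem_filter, Finset.mem_range] at hi hi'
          by_contra hne
          rcases lt_trichotomy i i' with h | h | h
          · exact claim1 i i' h hi'.1 hi.2 hi'.2
          · exact hne h
          · exact claim1 i' i h hi.1 hi'.2 hi.2
        rw [Finset.card_range, ← hGoodF] at hsplit
        omega
      set f : ℕ → VG := fun i => if chainV i ∈ S then chainV i else TV i with hfdef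
      have hfS : ∀ i ∈ GoodF, f i ∈ S := by
        intro i hi
        rw [hGoodF, Finset.mem_filter, Finset.mem_range] at hi
        by_cases h : chainV i ∈ S
        · rw [hfdef]
          simp [h]
        · rw [hfdef]
          simp only [h, if_false]
          exact hL1 i hi.1 h
      have hfnN : ∀ i ∈ GoodF, ¬ N ≤ (f i).1 := by
        intro i hi hN
        rw [hGoodF, Finset.mem_filter, Finset.mem_range] at hi
        rw [hfdef] at hN
        by_cases h : chainV i ∈ S
        · simp only [h, if_true] at hN
          exact (hσltN i hi.1).ne (le_antisymm (hσleN i) hN)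
        · simp only [h, if_false] at hN
          exact hi.2 ⟨h, ⟨x - 1, by omega⟩, by rw [le_antisymm (hTleN i) hN, hlast]⟩
      have hfinj : Set.InjOn f ↑GoodF := by
        intro i hi i' hi' heq
        rw [Finset.mem_coe, hGoodF, Finset.mem_filter, Finset.mem_range] at hi hi'
        rw [hfdef] at heq
        by_cases h : chainV i ∈ S <;> by_cases h' : chainV i' ∈ S
        · simp only [h, h', if_true] at heq
          exact hchainVinj i (Finset.mem_range.mpr hi.1) i' (Finset.mem_range.mpr hi'.1) heq
        · simp only [h, h', if_true, if_false] at heq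
          exact absurd ⟨h', ⟨⟨i, by omega⟩, by
            rw [← hσeq i (by omega)]
            exact (congrArg Subtype.val heq).symm⟩⟩ hi'.2
        · simp only [h, h', if_true, if_false] at heq
          exact absurd ⟨h, ⟨⟨i', by omega⟩, by
            rw [← hσeq i' (by omega)]
            exact congrArg Subtype.val heq⟩⟩ hi.2
        · simp only [h, h', if_false] at heq
          have hTT : T i = T i' := congrArg Subtype.val heq
          by_contra hne
          rcases lt_trichotomy i i' with hlt | hlt | hlt
          · exact h' (hL2 i' hi'.1 (hL3 i i' hlt (by omega) (hTT ▸ le_sup_right)))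
          · exact hne hlt
          · exact h (hL2 i hi.1 (hL3 i' i hlt (by omega) (hTT ▸ le_sup_right)))
      refine ⟨FC ∪ GoodF.image f, ?_, ?_⟩
      · intro v hv
        rw [Finset.coe_union, Set.mem_union] at hv
        rcases hv with hv | hv
        · exact hCinS v (hFCN v (by exact_mod_cast hv))
        · rw [Finset.mem_coe, Finset.mem_image] at hv
          obtain ⟨i, hi, rfl⟩ := hv
          exact hfS i hi
      · have hdisj : Disjoint FC (GoodF.image f) := by
          rw [Finset.disjoint_left]
          intro v hv hv'
          rw [Finset.mem_image] at hv'
          obtain ⟨i, hi, rfl⟩ := hv'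
          exact hfnN i hi (hFCN _ hv)
        rw [Finset.card_union_of_disjoint hdisj, Finset.card_image_of_injOn hfinj]
        omega
    -- CASE B : every vertex in the component meets N trivially
    · push_neg at hA
      have hHN : cv.1 ⊓ N = ⊥ := hA cv hcP
      set U : ℕ → Subgroup G := fun i => cv.1 ⊔ σ i with hU
      have hUinfN : ∀ i, U i ⊓ N = σ i := by
        intro i
        haveI := hσnormal i
        have hd := my_dedekind cv.1 (σ i) N (hσleN i)
        rw [hHN, bot_sup_eq] at hd
        exact hd
      have hUbot : ∀ i, U i ≠ ⊥ := fun i h => cv.2.1 (le_bot_iff.mp (le_trans le_sup_left h.le))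
      have hUtop : ∀ i, i < y → U i ≠ ⊤ := by
        intro i hi h
        apply (hσltN i hi).ne'
        rw [← hUinfN i, h, top_inf_eq]
      set UV : ℕ → VG := fun i => if hi : i < y then ⟨U i, hUbot i, hUtop i hi⟩ else NV
        with hUVdef
      have hUVval : ∀ i, i < y → (UV i).1 = U i := by
        intro i hi
        rw [hUVdef]
        simp only [dif_pos hi]
      have hUVS : ∀ i, i < y → UV i ∈ S := by
        intro i hi
        have hUVP : UV i ∉ Pset := by
          intro h
          have := hA (UV i) h
          rw [hUVval i hi, hUinfN i] at this
          exact hσbot i this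
        refine hPS2 cv (UV i) hcP ⟨?_, ?_⟩ hUVP
        · intro h
          apply hσbot i
          rw [← hUinfN i, ← hUVval i hi, ← h, hHN]
        · rw [hUVval i hi]
          intro h
          exact cv.2.1 (le_bot_iff.mp (le_trans (le_inf le_rfl le_sup_left) h.le))
      have hUVnotN : ∀ i, i < y → ¬ N ≤ (UV i).1 := by
        intro i hi h
        rw [hUVval i hi] at h
        apply (hσltN i hi).ne'
        rw [← hUinfN i, inf_eq_right.mpr h]
      have hUVinj : Set.InjOn UV ↑(Finset.range y) := by
        intro i hi i' hi' heq
        rw [Finset.coe_range, Set.mem_Iio] at hi hi'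
        have hσeq' : σ i = σ i' := by
          rw [← hUinfN i, ← hUinfN i', ← hUVval i hi, ← hUVval i' hi', heq]
        by_contra hne
        rcases lt_trichotomy i i' with h | h | h
        · exact (hσmono i i' h (by omega)).ne hσeq'
        · exact hne h
        · exact (hσmono i' i h (by omega)).ne hσeq'.symm
      have hUVdisj : ∀ (F1 : Finset VG), (∀ v ∈ F1, N ≤ v.1) →
          Disjoint F1 ((Finset.range y).image UV) := by
        intro F1 hF1
        rw [Finset.disjoint_left]
        intro v hv hv'
        rw [Finset.mem_image] at hv'
        obtain ⟨i, hi, rfl⟩ := hv'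
        rw [Finset.mem_range] at hi
        exact hUVnotN i hi (hF1 _ hv)
      have hUVcard : ((Finset.range y).image UV).card = y := by
        rw [Finset.card_image_of_injOn hUVinj, Finset.card_range]
      have hcvneK : ∀ K : VG, N ≤ K.1 → cv ≠ K := by
        intro K hK h
        have hNcv : N ≤ cv.1 := by rw [h]; exact hK
        exact hNbot (le_bot_iff.mp (le_trans (le_inf hNcv le_rfl) hHN.le))
      by_cases hHtop : cv.1 ⊔ N = ⊤
      -- CASE B1
      · have hψS : ∀ K : VQ, ψ K ∈ S := by
          intro K
          have hKP : ψ K ∉ Pset := fun h => hPD _ h (Or.inl (hψN K))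
          have hinf : cv.1 ⊓ (ψ K).1 ≠ ⊥ := by
            intro h
            apply hψneN K
            have hd := my_dedekind cv.1 N (ψ K).1 (hψN K)
            rw [hHtop, top_inf_eq, h, bot_sup_eq] at hd
            exact hd
          exact hPS2 cv (ψ K) hcP ⟨hcvneK _ (hψN K), hinf⟩ hKP
        refine ⟨FC ∪ (Finset.range y).image UV, ?_, ?_⟩
        · intro v hv
          rw [Finset.coe_union, Set.mem_union] at hv
          rcases hv with hv | hv
          · rw [Finset.mem_coe, hFC, Finset.mem_image] at hv
            obtain ⟨K, -, rfl⟩ := hv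
            exact hψS K
          · rw [Finset.mem_coe, Finset.mem_image] at hv
            obtain ⟨i, hi, rfl⟩ := hv
            rw [Finset.mem_range] at hi
            exact hUVS i hi
        · rw [Finset.card_union_of_disjoint (hUVdisj FC hFCN), hUVcard]
          omega
      -- CASE B2
      · have hQbot : Subgroup.map π (cv.1 ⊔ N) ≠ ⊥ := by
          intro h
          rw [Subgroup.map_eq_bot_iff, hker] at h
          exact cv.2.1 (le_bot_iff.mp
            (le_trans (le_inf le_rfl (le_sup_left.trans h)) hHN.le))
        have hQtop : Subgroup.map π (cv.1 ⊔ N) ≠ ⊤ := by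
          intro h
          apply hHtop
          have h2 := congrArg (Subgroup.comap π) h
          rw [Subgroup.comap_map_eq, hker, Subgroup.comap_top, sup_assoc, sup_idem] at h2
          exact h2
        set Qb : VQ := ⟨Subgroup.map π (cv.1 ⊔ N), hQbot, hQtop⟩ with hQb
        have hψQ : (ψ Qb).1 = cv.1 ⊔ N := by
          show Subgroup.comap π (Subgroup.map π (cv.1 ⊔ N)) = cv.1 ⊔ N
          rw [Subgroup.comap_map_eq, hker, sup_assoc, sup_idem]
        have hQS : ψ Qb ∈ S := by
          have hKP : ψ Qb ∉ Pset := fun h => hPD _ h (Or.inl (hψN Qb))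
          refine hPS2 cv (ψ Qb) hcP ⟨hcvneK _ (hψN Qb), ?_⟩ hKP
          rw [hψQ, inf_eq_left.mpr le_sup_left]
          exact cv.2.1
        have hnbrS : ∀ W : VQ, (interGraph (G ⧸ N)).Adj Qb W → ψ W ∈ S := by
          intro W hadj
          have hKP : ψ W ∉ Pset := fun h => hPD _ h (Or.inl (hψN W))
          refine hPS2 cv (ψ W) hcP ⟨hcvneK _ (hψN W), ?_⟩ hKP
          intro h
          have hRN : (ψ W).1 ⊓ (cv.1 ⊔ N) = Subgroup.comap π (W.1 ⊓ Qb.1) := by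
            calc (ψ W).1 ⊓ (cv.1 ⊔ N) = (ψ W).1 ⊓ (ψ Qb).1 := by rw [hψQ]
            _ = Subgroup.comap π (W.1 ⊓ Qb.1) := (Subgroup.comap_inf _ _ _).symm
          have hne' : W.1 ⊓ Qb.1 ≠ ⊥ := by
            rw [inf_comm]
            exact hadj.2
          have hRneN : (ψ W).1 ⊓ (cv.1 ⊔ N) ≠ N := by
            rw [hRN]
            intro h'
            apply hne'
            apply Subgroup.comap_injective hπ
            rw [h', hcomap_bot]
          have hNR : N ≤ (ψ W).1 ⊓ (cv.1 ⊔ N) := le_inf (hψN W) le_sup_right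
          have hd := my_dedekind cv.1 N ((ψ W).1 ⊓ (cv.1 ⊔ N)) hNR
          rw [inf_eq_right.mpr inf_le_right] at hd
          have hcvR : cv.1 ⊓ ((ψ W).1 ⊓ (cv.1 ⊔ N)) = ⊥ := le_bot_iff.mp
            (le_trans (le_inf inf_le_left (inf_le_right.trans inf_le_left)) h.le)
          rw [hcvR, bot_sup_eq] at hd
          exact hRneN hd
        have hdeg := my_min_degree (interGraph (G ⧸ N)) m hquot Qb
        set F1 : Finset VG := insert (ψ Qb)
          ((Finset.univ.filter (fun W : VQ => (interGraph (G ⧸ N)).Adj Qb W)).image ψ)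
          with hF1
        have hQnotmem : ψ Qb ∉
            (Finset.univ.filter (fun W : VQ => (interGraph (G ⧸ N)).Adj Qb W)).image ψ := by
          rw [Finset.mem_image]
          rintro ⟨W, hW, hWQ⟩
          rw [Finset.mem_filter] at hW
          exact (interGraph (G ⧸ N)).loopless.irrefl Qb (hψinj hWQ ▸ hW.2)
        have hF1card : m + 1 ≤ F1.card := by
          rw [hF1, Finset.card_insert_of_notMem hQnotmem,
            Finset.card_image_of_injective _ hψinj]
          have hcc : (Finset.univ.filter
              (fun W : VQ => (interGraph (G ⧸ N)).Adj Qb W)).card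
              = Nat.card {w : VQ // (interGraph (G ⧸ N)).Adj Qb w} := by
            rw [Nat.card_eq_fintype_card, Fintype.card_subtype]
          have hdeg' : m ≤ (Finset.univ.filter
              (fun W : VQ => (interGraph (G ⧸ N)).Adj Qb W)).card :=
            le_trans hdeg (le_of_eq hcc.symm)
          omega
        have hF1N : ∀ v ∈ F1, N ≤ v.1 := by
          intro v hv
          rw [hF1, Finset.mem_insert] at hv
          rcases hv with rfl | hv
          · exact hψN Qb
          · rw [Finset.mem_image] at hv
            obtain ⟨W, -, rfl⟩ := hv
            exact hψN W
        refine ⟨F1 ∪ (Finset.range y).image UV, ?_, ?_⟩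
        · intro v hv
          rw [Finset.coe_union, Set.mem_union] at hv
          rcases hv with hv | hv
          · rw [Finset.mem_coe, hF1, Finset.mem_insert] at hv
            rcases hv with rfl | hv
            · exact hQS
            · rw [Finset.mem_image] at hv
              obtain ⟨W, hW, rfl⟩ := hv
              rw [Finset.mem_filter] at hW
              exact hnbrS W hW.2
          · rw [Finset.mem_coe, Finset.mem_image] at hv
            obtain ⟨i, hi, rfl⟩ := hv
            rw [Finset.mem_range] at hi
            exact hUVS i hi
        · rw [Finset.card_union_of_disjoint (hUVdisj F1 hF1N), hUVcard]
          omega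
end

section
/- Let G be a finite nilpotent group of order p³q for distinct primes p, q such that Γ(G) is not 3-connected. Then G is cyclic, i.e. G ≅ ℤ_{p³q}. -/
open Pointwise

private lemma four_lt_card {V : Type*} [Finite V] {a b c d : V}
    (hab : a ≠ b) (hac : a ≠ c) (had : a ≠ d) (hbc : b ≠ c) (hbd : b ≠ d) (hcd : c ≠ d) :
    3 < Nat.card V := by
  have h3 : ({b, c, d} : Set V).ncard = 3 := Set.ncard_eq_three.mpr ⟨b, c, d, hbc, hbd, hcd, rfl⟩
  have h4 : ({a, b, c, d} : Set V).ncard = 4 := by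
    rw [Set.ncard_insert_of_notMem (by simp [hab, hac, had]) (Set.toFinite _), h3]
  have hle := Set.ncard_le_ncard (Set.subset_univ ({a, b, c, d} : Set V)) (Set.toFinite _)
  rw [Set.ncard_univ] at hle
  omega

private lemma three_le_ncard {V : Type*} [Finite V] {S : Set V} {x y z : V}
    (hx : x ∈ S) (hy : y ∈ S) (hz : z ∈ S) (hxy : x ≠ y) (hxz : x ≠ z) (hyz : y ≠ z) :
    3 ≤ Nat.card S := by
  rw [Nat.card_coe_set_eq]
  have h3 : ({x, y, z} : Set V).ncard = 3 := Set.ncard_eq_three.mpr ⟨x, y, z, hxy, hxz, hyz, rfl⟩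
  have hsub : ({x, y, z} : Set V) ⊆ S := by
    intro w hw
    rcases hw with h | h | h <;> subst h <;> assumption
  exact h3 ▸ Set.ncard_le_ncard hsub (Set.toFinite S)

private lemma kconn (G : Type*) [Group G] [Finite G] [Group.IsNilpotent G]
    (p q : ℕ) (hp : p.Prime) (hq : q.Prime) (hpq : p ≠ q)
    (hcard : Nat.card G = p ^ 3 * q) (hnc : ¬ IsCyclic G) :
    KConnected (interGraph G) 3 := by
  haveI fp : Fact p.Prime := ⟨hp⟩
  haveI fq : Fact q.Prime := ⟨hq⟩
  haveI : Finite (Subgroup G) := Finite.of_injective _ SetLike.coe_injective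
  obtain ⟨P⟩ : Nonempty (Sylow p G) := inferInstance
  obtain ⟨Q⟩ : Nonempty (Sylow q G) := inferInstance
  have hnorm : ∀ (r : ℕ) (_ : Fact r.Prime) (R : Sylow r G), (↑R : Subgroup G).Normal :=
    ((isNilpotent_of_finite_tfae (G := G)).out 0 3).mp ‹Group.IsNilpotent G›
  haveI hPn : (P : Subgroup G).Normal := hnorm p fp P
  haveI hQn : (Q : Subgroup G).Normal := hnorm q fq Q
  have hp1 := hp.one_lt
  have hq1 := hq.one_lt
  have hpp2 : p < p ^ 2 := by nlinarith
  have hpp3 : p < p ^ 3 := by nlinarith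
  have hp2p3 : p ^ 2 < p ^ 3 := by nlinarith
  have hp3q : p ^ 3 < p ^ 3 * q := (Nat.lt_mul_iff_one_lt_right (by positivity)).mpr hq1
  have hqp3q : q < p ^ 3 * q := (Nat.lt_mul_iff_one_lt_left (by omega)).mpr
    (Nat.one_lt_pow (by norm_num) hp1)
  have hfp : (p ^ 3 * q).factorization p = 3 := by
    rw [Nat.factorization_mul (pow_ne_zero 3 hp.pos.ne') hq.pos.ne',
      hp.factorization_pow, hq.factorization]
    simp [Finsupp.single_apply, hpq, (Ne.symm hpq)]
  have hfq : (p ^ 3 * q).factorization q = 1 := by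
    rw [Nat.factorization_mul (pow_ne_zero 3 hp.pos.ne') hq.pos.ne',
      hp.factorization_pow, hq.factorization]
    simp [Finsupp.single_apply, hpq, (Ne.symm hpq)]
  have hcP : Nat.card (P : Subgroup G) = p ^ 3 := by
    rw [Sylow.card_eq_multiplicity, hcard, hfp]
  have hcQ : Nat.card (Q : Subgroup G) = q := by
    rw [Sylow.card_eq_multiplicity, hcard, hfq, pow_one]
  -- basic facts
  have nbot : ∀ {H : Subgroup G}, Nat.card H ≠ 1 → H ≠ ⊥ :=
    fun h e => h (Subgroup.card_eq_one.mpr e)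
  have hppow_ne_one : ∀ k : ℕ, k ≠ 0 → p ^ k ≠ 1 := by
    intro k hk
    exact (Nat.one_lt_pow hk hp1).ne'
  have hPbot : (P : Subgroup G) ≠ ⊥ := nbot (by rw [hcP]; exact hppow_ne_one 3 (by norm_num))
  have hQbot : (Q : Subgroup G) ≠ ⊥ := nbot (by rw [hcQ]; omega)
  have hPtop : (P : Subgroup G) ≠ ⊤ := by
    intro h
    rw [h, Subgroup.card_top, hcard] at hcP
    exact ne_of_gt hp3q hcP
  have hQP : ¬(Q : Subgroup G) ≤ (P : Subgroup G) := by
    intro h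
    have hd := Subgroup.card_dvd_of_le h
    rw [hcP, hcQ] at hd
    exact hpq ((Nat.prime_dvd_prime_iff_eq hq hp).mp (hq.dvd_of_dvd_pow hd)).symm
  have hPQ : (P : Subgroup G) ⊓ (Q : Subgroup G) = ⊥ := by
    rw [← Subgroup.card_eq_one]
    have h1 := Subgroup.card_dvd_of_le (inf_le_left (a := (P : Subgroup G)) (b := (Q : Subgroup G)))
    have h2 := Subgroup.card_dvd_of_le (inf_le_right (a := (P : Subgroup G)) (b := (Q : Subgroup G)))
    rw [hcP] at h1
    rw [hcQ] at h2
    have hcop : Nat.Coprime (p ^ 3) q := Nat.Coprime.pow_left 3 ((Nat.coprime_primes hp hq).mpr hpq)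
    exact Nat.dvd_one.mp (hcop ▸ Nat.dvd_gcd h1 h2)
  have nb : ∀ {K H : Subgroup G}, K ≠ ⊥ → K ≤ H → H ≠ ⊥ :=
    fun hK hle h => hK (le_bot_iff.mp (h ▸ hle))
  have hple : ∀ {H : Subgroup G}, IsPGroup p H → H ≤ (P : Subgroup G) := by
    intro H hH
    obtain ⟨R, hR⟩ := hH.exists_le_sylow
    haveI := Sylow.unique_of_normal P hPn
    rwa [Subsingleton.elim R P] at hR
  have hqle : ∀ {H : Subgroup G}, IsPGroup q H → H ≤ (Q : Subgroup G) := by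
    intro H hH
    obtain ⟨R, hR⟩ := hH.exists_le_sylow
    haveI := Sylow.unique_of_normal Q hQn
    rwa [Subsingleton.elim R Q] at hR
  have hordmem : ∀ x : G, orderOf x = p → Subgroup.zpowers x ≤ (P : Subgroup G) := fun x hx =>
    hple (IsPGroup.of_card (by rw [Nat.card_zpowers, hx, pow_one]))
  have hQeq : ∀ x : G, orderOf x = q → Subgroup.zpowers x = (Q : Subgroup G) := fun x hx =>
    Subgroup.eq_of_le_of_card_ge
      (hqle (IsPGroup.of_card (by rw [Nat.card_zpowers, hx, pow_one])))
      (by rw [hcQ, Nat.card_zpowers, hx])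
  have hclass : ∀ H : Subgroup G, H ≠ ⊥ → H ≤ (P : Subgroup G) ∨ (Q : Subgroup G) ≤ H := by
    intro H hH
    by_cases hdvd : q ∣ Nat.card H
    · right
      obtain ⟨x, hx⟩ := exists_prime_orderOf_dvd_card' (G := ↥H) q hdvd
      have hx' : orderOf (x : G) = q := by
        have horder := orderOf_injective H.subtype H.subtype_injective x
        rw [hx] at horder
        exact horder
      rw [← hQeq _ hx']
      exact Subgroup.zpowers_le.mpr x.2
    · left
      apply hple
      have h1 : Nat.card H ∣ p ^ 3 * q := hcard ▸ Subgroup.card_subgroup_dvd_card H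
      have hcop : Nat.Coprime (Nat.card H) q := (hq.coprime_iff_not_dvd.mpr hdvd).symm
      have h2 : Nat.card H ∣ p ^ 3 := hcop.dvd_of_dvd_mul_right h1
      obtain ⟨k, _, hk⟩ := (Nat.dvd_prime_pow hp).mp h2
      exact IsPGroup.of_card hk
  have hinf : ∀ A : Subgroup G, A ≤ (P : Subgroup G) →
      (A ⊔ (Q : Subgroup G)) ⊓ (P : Subgroup G) = A := by
    intro A hA
    refine le_antisymm ?_ (le_inf le_sup_left hA)
    intro x hx
    obtain ⟨hx1, hx2⟩ := Subgroup.mem_inf.mp hx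
    have hx1' : x ∈ ((A : Set G) * ((Q : Subgroup G) : Set G)) := by
      rw [← Subgroup.mul_normal]
      exact hx1
    rw [Set.mem_mul] at hx1'
    obtain ⟨a, ha, y, hy, rfl⟩ := hx1'
    have hyP : y ∈ (P : Subgroup G) := by
      have := (P : Subgroup G).mul_mem (inv_mem (hA ha)) hx2
      simpa [mul_assoc] using this
    have hyb : y ∈ ((P : Subgroup G) ⊓ (Q : Subgroup G)) := ⟨hyP, hy⟩
    rw [hPQ, Subgroup.mem_bot] at hyb
    rw [hyb, mul_one]
    exact ha
  have hsupinj : ∀ A A' : Subgroup G, A ≤ (P : Subgroup G) → A' ≤ (P : Subgroup G) →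
      A ⊔ (Q : Subgroup G) = A' ⊔ (Q : Subgroup G) → A = A' := by
    intro A A' hA hA' h
    rw [← hinf A hA, h, hinf A' hA']
  have hle_ne_top : ∀ {A : Subgroup G}, A ≤ (P : Subgroup G) → A ≠ ⊤ :=
    fun hA h => hPtop (top_le_iff.mp (h ▸ hA))
  have hsup_ne_top : ∀ {A : Subgroup G}, A ≤ (P : Subgroup G) → A ≠ (P : Subgroup G) →
      A ⊔ (Q : Subgroup G) ≠ ⊤ := by
    intro A hA hAP h
    exact hAP (by rw [← hinf A hA, h, top_inf_eq])
  have hsup_ne_P : ∀ A : Subgroup G, A ⊔ (Q : Subgroup G) ≠ (P : Subgroup G) :=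
    fun A h => hQP (le_sup_right.trans_eq h)
  have hQ_ne_sup : ∀ A : Subgroup G, A ≤ (P : Subgroup G) → A ≠ ⊥ →
      (Q : Subgroup G) ≠ A ⊔ (Q : Subgroup G) := by
    intro A hA hAb h
    have : A ≤ (P : Subgroup G) ⊓ (Q : Subgroup G) := le_inf hA (le_sup_left.trans_eq h.symm)
    rw [hPQ] at this
    exact hAb (le_bot_iff.mp this)
  have hne_sup_self : ∀ {A : Subgroup G}, A ≤ (P : Subgroup G) →
      A ≠ A ⊔ (Q : Subgroup G) := by
    intro A hA h
    exact hQP (le_trans (le_sup_right.trans_eq h.symm) hA)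
  -- P is not cyclic (as a subgroup)
  have hPnc : ∀ g ∈ (P : Subgroup G), Subgroup.zpowers g ≠ (P : Subgroup G) := by
    intro g hg hzp
    obtain ⟨y, hy⟩ := exists_prime_orderOf_dvd_card' (G := ↥(Q : Subgroup G)) q (by rw [hcQ])
    have hyq : orderOf (y : G) = q := by
      have horder := orderOf_injective (Q : Subgroup G).subtype (Q : Subgroup G).subtype_injective y
      rw [hy] at horder
      exact horder
    have hgord : orderOf g = p ^ 3 := by rw [← Nat.card_zpowers, hzp, hcP]
    have hcomm : Commute g (y : G) :=
      Subgroup.commute_of_normal_of_disjoint _ _ hPn hQn (disjoint_iff.mpr hPQ) _ _ hg y.2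
    have hord : orderOf (g * (y : G)) = p ^ 3 * q := by
      rw [hcomm.orderOf_mul_eq_mul_orderOf_of_coprime (by
        rw [hgord, hyq]
        exact Nat.Coprime.pow_left 3 ((Nat.coprime_primes hp hq).mpr hpq)), hgord, hyq]
    exact hnc (isCyclic_of_orderOf_eq_card _ (by rw [hord, hcard]))
  -- three distinct nontrivial proper subgroups of P
  obtain ⟨x, hx⟩ := exists_prime_orderOf_dvd_card' (G := G) p
    (by rw [hcard]; exact dvd_mul_of_dvd_left (dvd_pow_self p (by norm_num)) q)
  have hB0P : Subgroup.zpowers x ≤ (P : Subgroup G) := hordmem x hx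
  have hcB0 : Nat.card (Subgroup.zpowers x) = p := by rw [Nat.card_zpowers, hx]
  have hB0bot : Subgroup.zpowers x ≠ ⊥ := nbot (by rw [hcB0]; omega)
  have hB0neP : Subgroup.zpowers x ≠ (P : Subgroup G) := by
    intro h
    rw [h, hcP] at hcB0
    exact ne_of_gt hpp3 hcB0
  obtain ⟨M0, hcM0, hBM0⟩ := Sylow.exists_subgroup_card_pow_succ (G := G) (p := p) (n := 1)
    (by rw [hcard]; exact Dvd.intro (p * q) (by ring)) (by rw [pow_one]; exact hcB0)
  have hM0P : M0 ≤ (P : Subgroup G) := hple (IsPGroup.of_card hcM0)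
  have hM0neP : M0 ≠ (P : Subgroup G) := by
    intro h
    rw [h, hcP] at hcM0
    exact ne_of_gt hp2p3 hcM0
  have hM0bot : M0 ≠ ⊥ := nbot (by rw [hcM0]; exact hppow_ne_one 2 (by norm_num))
  have hB0neM0 : Subgroup.zpowers x ≠ M0 := by
    intro h
    rw [h] at hcB0
    rw [hcB0] at hcM0
    exact ne_of_lt hpp2 hcM0
  obtain ⟨y, hyP, hyM0⟩ := SetLike.not_le_iff_exists.mp
    (show ¬(P : Subgroup G) ≤ M0 from fun h => hM0neP (le_antisymm hM0P h))
  have hY0P : Subgroup.zpowers y ≤ (P : Subgroup G) := Subgroup.zpowers_le.mpr hyP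
  have hY0bot : Subgroup.zpowers y ≠ ⊥ := by
    intro h
    exact hyM0 (by
      have : y ∈ Subgroup.zpowers y := Subgroup.mem_zpowers y
      rw [h, Subgroup.mem_bot] at this
      rw [this]; exact M0.one_mem)
  have hY0neP : Subgroup.zpowers y ≠ (P : Subgroup G) := hPnc y hyP
  have hY0neB0 : Subgroup.zpowers y ≠ Subgroup.zpowers x := by
    intro h
    exact hyM0 (hBM0 (h ▸ Subgroup.mem_zpowers y))
  have hY0neM0 : Subgroup.zpowers y ≠ M0 := by
    intro h
    exact hyM0 (h ▸ Subgroup.mem_zpowers y)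
  -- vertices
  have hQtop : (Q : Subgroup G) ≠ ⊤ := by
    intro h
    rw [h, Subgroup.card_top, hcard] at hcQ
    exact ne_of_gt hqp3q hcQ
  constructor
  · -- more than 3 vertices
    refine four_lt_card (a := ⟨Subgroup.zpowers x, hB0bot, hle_ne_top hB0P⟩)
      (b := ⟨M0, hM0bot, hle_ne_top hM0P⟩)
      (c := ⟨(P : Subgroup G), hPbot, hPtop⟩)
      (d := ⟨(Q : Subgroup G), hQbot, hQtop⟩) ?_ ?_ ?_ ?_ ?_ ?_
    · exact fun h => hB0neM0 (congrArg Subtype.val h)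
    · exact fun h => hB0neP (congrArg Subtype.val h)
    · exact fun h => hQP (le_of_eq_of_le (congrArg Subtype.val h).symm hB0P)
    · exact fun h => hM0neP (congrArg Subtype.val h)
    · exact fun h => hQP (le_of_eq_of_le (congrArg Subtype.val h).symm hM0P)
    · exact fun h => hQP (le_of_eq (congrArg Subtype.val h).symm)
  · intro S hsep
    by_contra hcard3
    push_neg at hcard3
    obtain ⟨a, b, hnr⟩ := hsep
    refine hnr ?_
    have hS2 : ∀ u v w : {H : Subgroup G // H ≠ ⊥ ∧ H ≠ ⊤},
        u ∈ S → v ∈ S → w ∈ S → u ≠ v → u ≠ w → v ≠ w → False := by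
      intro u v w h1 h2 h3 h4 h5 h6
      exact absurd (three_le_ncard h1 h2 h3 h4 h5 h6) (by omega)
    have vne : ∀ {u v : {H : Subgroup G // H ≠ ⊥ ∧ H ≠ ⊤}}, u.1 ≠ v.1 → u ≠ v :=
      fun h e => h (congrArg Subtype.val e)
    have adj : ∀ u v : ↥(Sᶜ), u.1.1 ≠ v.1.1 → u.1.1 ⊓ v.1.1 ≠ ⊥ →
        ((interGraph G).induce Sᶜ).Adj u v := by
      intro u v h1 h2
      exact ⟨vne h1, h2⟩
    have reach1 : ∀ u v : ↥(Sᶜ), u.1.1 ≠ v.1.1 → u.1.1 ⊓ v.1.1 ≠ ⊥ →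
        ((interGraph G).induce Sᶜ).Reachable u v :=
      fun u v h1 h2 => (adj u v h1 h2).reachable
    have key : ∀ A : Subgroup G, A ≤ (P : Subgroup G) → A ≠ ⊥ → A ≠ (P : Subgroup G) →
        ∃ v : {H : Subgroup G // H ≠ ⊥ ∧ H ≠ ⊤}, v.1 = A ⊔ (Q : Subgroup G) :=
      fun A h1 h2 h3 => ⟨⟨A ⊔ (Q : Subgroup G), nb hQbot le_sup_right, hsup_ne_top h1 h3⟩, rfl⟩
    by_cases hPS : (⟨(P : Subgroup G), hPbot, hPtop⟩ : {H : Subgroup G // H ≠ ⊥ ∧ H ≠ ⊤}) ∈ S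
    · -- P removed: route everything to the clique above Q
      have route : ∀ w : ↥(Sᶜ), ∃ c : ↥(Sᶜ), (Q : Subgroup G) ≤ c.1.1 ∧
          ((interGraph G).induce Sᶜ).Reachable w c := by
        intro w
        rcases hclass w.1.1 w.1.2.1 with hWP | hQW
        swap
        · exact ⟨w, hQW, SimpleGraph.Reachable.refl w⟩
        · have hWneP : w.1.1 ≠ (P : Subgroup G) := by
            intro h
            exact w.2 (by rwa [show w.1 = ⟨(P : Subgroup G), hPbot, hPtop⟩ from Subtype.ext h])
          obtain ⟨vAQ, hvAQ⟩ := key w.1.1 hWP w.1.2.1 hWneP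
          by_cases hAQS : vAQ ∈ S
          · have hPAQ : (⟨(P : Subgroup G), hPbot, hPtop⟩ :
                {H : Subgroup G // H ≠ ⊥ ∧ H ≠ ⊤}) ≠ vAQ := by
              refine vne ?_
              rw [hvAQ]
              exact fun h => hsup_ne_P w.1.1 h.symm
            have hnotS : ∀ z : {H : Subgroup G // H ≠ ⊥ ∧ H ≠ ⊤},
                z ≠ ⟨(P : Subgroup G), hPbot, hPtop⟩ → z ≠ vAQ → z ∉ S :=
              fun z h1 h2 hz => hS2 z _ vAQ hz hPS hAQS h1 h2 hPAQ
            have hApgrp : IsPGroup p w.1.1 := P.isPGroup'.to_le hWP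
            obtain ⟨k, hk⟩ := IsPGroup.iff_card.mp hApgrp
            have hk0 : k ≠ 0 := by
              intro h
              exact w.1.2.1 (Subgroup.card_eq_one.mp (by rw [hk, h, pow_zero]))
            obtain ⟨xa, hxa⟩ := exists_prime_orderOf_dvd_card' (G := ↥w.1.1) p
              (by rw [hk]; exact dvd_pow_self p hk0)
            have hxa' : orderOf (xa : G) = p := by
              have horder := orderOf_injective w.1.1.subtype w.1.1.subtype_injective xa
              rw [hxa] at horder
              exact horder
            have hBA : Subgroup.zpowers (xa : G) ≤ w.1.1 := Subgroup.zpowers_le.mpr xa.2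
            have hBP : Subgroup.zpowers (xa : G) ≤ (P : Subgroup G) := hordmem _ hxa'
            have hcB : Nat.card (Subgroup.zpowers (xa : G)) = p := by
              rw [Nat.card_zpowers, hxa']
            have hBbot : Subgroup.zpowers (xa : G) ≠ ⊥ := nbot (by rw [hcB]; omega)
            have hBneP : Subgroup.zpowers (xa : G) ≠ (P : Subgroup G) := by
              intro h
              rw [h, hcP] at hcB
              exact ne_of_gt hpp3 hcB
            by_cases hBeq : Subgroup.zpowers (xa : G) = w.1.1
            · -- w has order p; go up to a subgroup of order p²
              have hcA : Nat.card w.1.1 = p := hBeq ▸ hcB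
              obtain ⟨M, hcM, hAM⟩ := Sylow.exists_subgroup_card_pow_succ (G := G) (p := p)
                (n := 1) (by rw [hcard]; exact Dvd.intro (p * q) (by ring))
                (by rw [pow_one]; exact hcA)
              have hMP : M ≤ (P : Subgroup G) := hple (IsPGroup.of_card hcM)
              have hMneP : M ≠ (P : Subgroup G) := by
                intro h
                rw [h, hcP] at hcM
                exact ne_of_gt hp2p3 hcM
              have hMbot : M ≠ ⊥ := nbot (by rw [hcM]; exact hppow_ne_one 2 (by norm_num))
              have hAneM : w.1.1 ≠ M := by
                intro h
                rw [h] at hcA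
                rw [hcA] at hcM
                exact ne_of_lt hpp2 hcM
              obtain ⟨vMQ, hvMQ⟩ := key M hMP hMbot hMneP
              have hvM_notS : (⟨M, hMbot, hle_ne_top hMP⟩ :
                  {H : Subgroup G // H ≠ ⊥ ∧ H ≠ ⊤}) ∉ S := by
                refine hnotS _ (vne hMneP) (vne ?_)
                rw [hvAQ]
                exact fun h => hQP (le_trans (le_sup_right.trans_eq h.symm) hMP)
              have hvMQ_notS : vMQ ∉ S := by
                refine hnotS _ (vne ?_) (vne ?_)
                · rw [hvMQ]; exact fun h => hsup_ne_P M h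
                · rw [hvMQ, hvAQ]
                  exact fun h => hAneM (hsupinj _ _ hMP hWP h).symm
              refine ⟨⟨vMQ, hvMQ_notS⟩, by rw [hvMQ]; exact le_sup_right, ?_⟩
              refine (reach1 w ⟨⟨M, hMbot, hle_ne_top hMP⟩, hvM_notS⟩ hAneM
                (nb w.1.2.1 (le_inf le_rfl hAM))).trans
                (reach1 _ ⟨vMQ, hvMQ_notS⟩ ?_ ?_)
              · rw [hvMQ]; exact hne_sup_self hMP
              · rw [hvMQ]; exact nb hMbot (le_inf le_rfl le_sup_left)
            · -- B < w; go via B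
              have hBneA : w.1.1 ≠ Subgroup.zpowers (xa : G) := fun h => hBeq h.symm
              obtain ⟨vBQ, hvBQ⟩ := key _ hBP hBbot hBneP
              have hvB_notS : (⟨Subgroup.zpowers (xa : G), hBbot, hle_ne_top hBP⟩ :
                  {H : Subgroup G // H ≠ ⊥ ∧ H ≠ ⊤}) ∉ S := by
                refine hnotS _ (vne hBneP) (vne ?_)
                rw [hvAQ]
                exact fun h => hQP (le_trans (le_sup_right.trans_eq h.symm) hBP)
              have hvBQ_notS : vBQ ∉ S := by
                refine hnotS _ (vne ?_) (vne ?_)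
                · rw [hvBQ]; exact fun h => hsup_ne_P _ h
                · rw [hvBQ, hvAQ]
                  exact fun h => hBeq (hsupinj _ _ hBP hWP h)
              refine ⟨⟨vBQ, hvBQ_notS⟩, by rw [hvBQ]; exact le_sup_right, ?_⟩
              refine (reach1 w ⟨⟨Subgroup.zpowers (xa : G), hBbot, hle_ne_top hBP⟩, hvB_notS⟩
                hBneA (nb hBbot (le_inf hBA le_rfl))).trans
                (reach1 _ ⟨vBQ, hvBQ_notS⟩ ?_ ?_)
              · rw [hvBQ]; exact hne_sup_self hBP
              · rw [hvBQ]; exact nb hBbot (le_inf le_rfl le_sup_left)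
          · refine ⟨⟨vAQ, hAQS⟩, by rw [hvAQ]; exact le_sup_right, ?_⟩
            refine reach1 w ⟨vAQ, hAQS⟩ ?_ ?_
            · rw [hvAQ]; exact hne_sup_self hWP
            · rw [hvAQ]; exact nb w.1.2.1 (le_inf le_rfl le_sup_left)
      obtain ⟨ca, hQa, ra⟩ := route a
      obtain ⟨cb, hQb, rb⟩ := route b
      refine ra.trans (SimpleGraph.Reachable.trans ?_ rb.symm)
      by_cases h : ca.1.1 = cb.1.1
      · rw [show ca = cb from Subtype.ext (Subtype.ext h)]
      · exact reach1 ca cb h (nb hQbot (le_inf hQa hQb))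
    · -- P not removed: route everything through P
      set vP : ↥(Sᶜ) := ⟨⟨(P : Subgroup G), hPbot, hPtop⟩, hPS⟩ with hvP
      have hub : ∀ w : ↥(Sᶜ), ((interGraph G).induce Sᶜ).Reachable w vP := by
        intro w
        by_cases hw : w.1.1 = (P : Subgroup G)
        · rw [show w = vP from Subtype.ext (Subtype.ext hw)]
        · rcases hclass w.1.1 w.1.2.1 with hWP | hQW
          · exact reach1 w vP hw (nb w.1.2.1 (le_inf le_rfl hWP))
          · by_cases hwQ : w.1.1 = (Q : Subgroup G)
            · -- w = Q: route via one of three clique vertices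
              obtain ⟨c1, hc1⟩ := key _ hB0P hB0bot hB0neP
              obtain ⟨c2, hc2⟩ := key _ hM0P hM0bot hM0neP
              obtain ⟨c3, hc3⟩ := key _ hY0P hY0bot hY0neP
              have hc12 : c1 ≠ c2 := by
                refine vne ?_
                rw [hc1, hc2]
                exact fun h => hB0neM0 (hsupinj _ _ hB0P hM0P h)
              have hc13 : c1 ≠ c3 := by
                refine vne ?_
                rw [hc1, hc3]
                exact fun h => hY0neB0 (hsupinj _ _ hY0P hB0P h.symm)
              have hc23 : c2 ≠ c3 := by
                refine vne ?_
                rw [hc2, hc3]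
                exact fun h => hY0neM0 (hsupinj _ _ hY0P hM0P h.symm)
              have hex : c1 ∉ S ∨ c2 ∉ S ∨ c3 ∉ S := by
                by_contra h
                push_neg at h
                exact hS2 c1 c2 c3 h.1 h.2.1 h.2.2 hc12 hc13 hc23
              have main : ∀ (c : {H : Subgroup G // H ≠ ⊥ ∧ H ≠ ⊤}) (hcS : c ∉ S)
                  (A : Subgroup G), A ≤ (P : Subgroup G) → A ≠ ⊥ →
                  c.1 = A ⊔ (Q : Subgroup G) →
                  ((interGraph G).induce Sᶜ).Reachable w vP := by
                intro c hcS A hAP hAb hcA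
                refine (reach1 w ⟨c, hcS⟩ ?_ ?_).trans (reach1 ⟨c, hcS⟩ vP ?_ ?_)
                · rw [hwQ, hcA]; exact hQ_ne_sup A hAP hAb
                · rw [hwQ, hcA]; exact nb hQbot (le_inf le_rfl le_sup_right)
                · rw [hcA]; exact hsup_ne_P A
                · rw [hcA, hinf A hAP]; exact hAb
              rcases hex with h | h | h
              · exact main c1 h _ hB0P hB0bot hc1
              · exact main c2 h _ hM0P hM0bot hc2
              · exact main c3 h _ hY0P hY0bot hc3
            · -- Q < w, so w meets P nontrivially
              have hq_dvd : q ∣ Nat.card w.1.1 := hcQ ▸ Subgroup.card_dvd_of_le hQW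
              have hcw : Nat.card w.1.1 ∣ p ^ 3 * q :=
                hcard ▸ Subgroup.card_subgroup_dvd_card w.1.1
              have hne : Nat.card w.1.1 ≠ q := by
                intro h
                exact hwQ (Subgroup.eq_of_le_of_card_ge hQW (by rw [hcQ, h])).symm
              have hp_dvd : p ∣ Nat.card w.1.1 := by
                by_contra hpd
                have hcop : Nat.Coprime (Nat.card w.1.1) (p ^ 3) :=
                  ((hp.coprime_iff_not_dvd.mpr hpd).symm).pow_right 3
                have := hcop.dvd_of_dvd_mul_left hcw
                exact hne (Nat.dvd_antisymm this hq_dvd)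
              obtain ⟨z, hz⟩ := exists_prime_orderOf_dvd_card' (G := ↥w.1.1) p hp_dvd
              have hz' : orderOf (z : G) = p := by
                have horder := orderOf_injective w.1.1.subtype w.1.1.subtype_injective z
                rw [hz] at horder
                exact horder
              have hzbot : Subgroup.zpowers (z : G) ≠ ⊥ :=
                nbot (by rw [Nat.card_zpowers, hz']; omega)
              exact reach1 w vP hw
                (nb hzbot (le_inf (Subgroup.zpowers_le.mpr z.2) (hordmem _ hz')))
      exact (hub a).trans (hub b).symm

theorem stmt19 (G : Type*) [Group G] [Finite G] [Group.IsNilpotent G]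
    (p q : ℕ) (hp : p.Prime) (hq : q.Prime) (hpq : p ≠ q)
    (hcard : Nat.card G = p ^ 3 * q)
    (h3 : ¬ KConnected (interGraph G) 3) :
    IsCyclic G ∧ Nonempty (G ≃* Multiplicative (ZMod (p ^ 3 * q))) := by
  by_cases hcyc : IsCyclic G
  · exact ⟨hcyc, ⟨hcard ▸ (zmodCyclicMulEquiv hcyc).symm⟩⟩
  · exact absurd (kconn G p q hp hq hpq hcard hcyc) h3
end
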